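/- arXiv:2604.19515 — 5 statements merged into one kernel-verified Lean document; each statement's English description precedes it below -/
import Mathlib

section
/- Let Z be a square-integrable random vector in R^k, M a positive integer, and consider all (possibly stochastic) maps φ: R^k → {0,...,M-1}. For each φ let Z̃ = E[Z | φ(Z)]. If φ* minimizes E[‖Z − Z̃‖²] over this class, with corresponding estimate Z̃*, then E[‖Z − Z̃*‖²] = W₂²(p_Z, p_{Z̃*}), i.e., the minimum MSE equals the squared Wasserstein-2 distance between the source distribution and the distribution of the optimal MMSE estimate. -/
open MeasureTheory ProbabilityTheory Real Set
open scoped RealInnerProductSpace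

lemma factor_through {Ω E : Type*} [MeasurableSpace Ω] [MeasurableSpace E]
    [MeasurableSingletonClass E] [Nonempty E]
    {M : ℕ} (J : Ω → Fin M) {f : Ω → E}
    (hf : Measurable[MeasurableSpace.comap J inferInstance] f) :
    ∃ g : Fin M → E, f = g ∘ J := by
  classical
  refine ⟨fun j => if h : ∃ ω, J ω = j then f h.choose else Classical.arbitrary E, funext fun ω => ?_⟩
  have h : ∃ ω', J ω' = J ω := ⟨ω, rfl⟩
  simp only [Function.comp_apply, dif_pos h]
  have hs : MeasurableSet[MeasurableSpace.comap J inferInstance] (f ⁻¹' {f ω}) :=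
    hf (measurableSet_singleton (f ω))
  obtain ⟨t, -, ht⟩ := hs
  have hω : ω ∈ f ⁻¹' {f ω} := rfl
  have hωt : J ω ∈ t := by rw [← ht] at hω; exact hω
  have : h.choose ∈ f ⁻¹' {f ω} := by
    rw [← ht]; show J h.choose ∈ t; rw [h.choose_spec]; exact hωt
  exact this.symm

lemma memℒp_comp_fin {Ω : Type*} [MeasurableSpace Ω] {ν : Measure Ω} [IsProbabilityMeasure ν]
    {k M : ℕ} {J' : Ω → Fin M} (hJ' : Measurable J') (g : Fin M → EuclideanSpace ℝ (Fin k)) :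
    MemLp (fun ω => g (J' ω)) 2 ν := by
  obtain ⟨C, hC⟩ := Finite.exists_le (fun j => ‖g j‖)
  exact MemLp.of_bound (Measurable.aestronglyMeasurable (Measurable.of_discrete.comp hJ'))
    C (Filter.Eventually.of_forall fun ω => hC (J' ω))

lemma condexp_min {Ω : Type*} [m0 : MeasurableSpace Ω] (ν : Measure Ω) [IsProbabilityMeasure ν]
    {k M : ℕ} (f : Ω → EuclideanSpace ℝ (Fin k))
    (hf : MemLp f 2 ν) {J' : Ω → Fin M} (hJ' : Measurable J')
    (g : Fin M → EuclideanSpace ℝ (Fin k)) :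
    ∫ ω, ‖f ω - (ν[f | MeasurableSpace.comap J' inferInstance]) ω‖ ^ 2 ∂ν ≤
      ∫ ω, ‖f ω - g (J' ω)‖ ^ 2 ∂ν := by
  classical
  have hm : MeasurableSpace.comap J' inferInstance ≤ m0 := hJ'.comap_le
  obtain ⟨gt, hgt⟩ := factor_through J'
    (stronglyMeasurable_condExp (μ := ν) (f := f)
      (m := MeasurableSpace.comap J' inferInstance)).measurable
  set ft := ν[f|MeasurableSpace.comap J' inferInstance] with hft_def
  have hft2 : MemLp ft 2 ν := by rw [hgt]; exact memℒp_comp_fin hJ' gt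
  have hfint : Integrable f ν := hf.integrable one_le_two
  set u := fun ω => f ω - ft ω with hu_def
  set v := fun ω => ft ω - g (J' ω) with hv_def
  have hu2 : MemLp u 2 ν := hf.sub hft2
  have hv2 : MemLp v 2 ν := hft2.sub (memℒp_comp_fin hJ' g)
  have hfh2 : MemLp (fun ω => f ω - g (J' ω)) 2 ν := hf.sub (memℒp_comp_fin hJ' g)
  have I1 : Integrable (fun ω => ‖f ω - g (J' ω)‖ ^ 2) ν :=
    (memLp_two_iff_integrable_sq_norm hfh2.aestronglyMeasurable).1 hfh2
  have I2 : Integrable (fun ω => ‖u ω‖ ^ 2) ν :=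
    (memLp_two_iff_integrable_sq_norm hu2.aestronglyMeasurable).1 hu2
  have I3 : Integrable (fun ω => ‖v ω‖ ^ 2) ν :=
    (memLp_two_iff_integrable_sq_norm hv2.aestronglyMeasurable).1 hv2
  have hpoint : ∀ ω, ‖f ω - g (J' ω)‖ ^ 2 = ‖u ω‖ ^ 2 + 2 * ⟪u ω, v ω⟫ + ‖v ω‖ ^ 2 := by
    intro ω
    have h : f ω - g (J' ω) = u ω + v ω := by
      rw [hu_def, hv_def]; exact (sub_add_sub_cancel _ _ _).symm
    rw [h, norm_add_sq_real]
  have Icross : Integrable (fun ω => ⟪u ω, v ω⟫) ν := by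
    have h : (fun ω => ⟪u ω, v ω⟫) =
        fun ω => (‖f ω - g (J' ω)‖ ^ 2 - ‖u ω‖ ^ 2 - ‖v ω‖ ^ 2) / 2 := by
      funext ω; rw [hpoint ω]; ring
    rw [h]; exact ((I1.sub I2).sub I3).div_const 2
  have hcross0 : ∫ ω, ⟪u ω, v ω⟫ ∂ν = 0 := by
    have hU : ⋃ j : Fin M, J' ⁻¹' {j} = Set.univ := by ext ω; simp
    have hmeas : ∀ j : Fin M, MeasurableSet (J' ⁻¹' {j}) :=
      fun j => hJ' (measurableSet_singleton j)
    have hdisj : Pairwise (Function.onFun Disjoint fun j : Fin M => J' ⁻¹' {j}) :=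
      fun i j hij => Disjoint.preimage J' (by simpa using hij)
    calc ∫ ω, ⟪u ω, v ω⟫ ∂ν = ∫ ω in ⋃ j : Fin M, J' ⁻¹' {j}, ⟪u ω, v ω⟫ ∂ν := by
          rw [hU, setIntegral_univ]
      _ = ∑' j : Fin M, ∫ ω in J' ⁻¹' {j}, ⟪u ω, v ω⟫ ∂ν :=
          integral_iUnion hmeas hdisj Icross.integrableOn
      _ = ∑ j : Fin M, ∫ ω in J' ⁻¹' {j}, ⟪u ω, v ω⟫ ∂ν := tsum_fintype _
      _ = 0 := by
          refine Finset.sum_eq_zero fun j _ => ?_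
          have hsm : MeasurableSet[MeasurableSpace.comap J'
              (inferInstance : MeasurableSpace (Fin M))] (J' ⁻¹' {j}) := ⟨{j}, trivial, rfl⟩
          have huint : IntegrableOn u (J' ⁻¹' {j}) ν :=
            (hu2.integrable one_le_two).integrableOn
          have h1 : ∫ ω in J' ⁻¹' {j}, ⟪u ω, v ω⟫ ∂ν =
              ∫ ω in J' ⁻¹' {j}, ⟪u ω, gt j - g j⟫ ∂ν := by
            refine setIntegral_congr_fun (hmeas j) fun ω hω => ?_
            have hωj : J' ω = j := hω
            simp only [hv_def, hgt, Function.comp_apply, hωj]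
          have h3 : ∫ ω in J' ⁻¹' {j}, u ω ∂ν = 0 := by
            rw [hu_def]
            rw [integral_sub hfint.integrableOn integrable_condExp.integrableOn,
              setIntegral_condExp hm hfint hsm, sub_self]
          calc ∫ ω in J' ⁻¹' {j}, ⟪u ω, v ω⟫ ∂ν
              = ∫ ω in J' ⁻¹' {j}, ⟪gt j - g j, u ω⟫ ∂ν := by
                rw [h1]
                exact integral_congr_ae (Filter.Eventually.of_forall
                  fun ω => real_inner_comm _ _)
            _ = ⟪gt j - g j, ∫ ω in J' ⁻¹' {j}, u ω ∂ν⟫ := integral_inner huint _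
            _ = 0 := by rw [h3, inner_zero_right]
  have hsplit : ∫ ω, ‖f ω - g (J' ω)‖ ^ 2 ∂ν =
      ∫ ω, ‖u ω‖ ^ 2 ∂ν + (2 * ∫ ω, ⟪u ω, v ω⟫ ∂ν + ∫ ω, ‖v ω‖ ^ 2 ∂ν) := by
    calc ∫ ω, ‖f ω - g (J' ω)‖ ^ 2 ∂ν
        = ∫ ω, (‖u ω‖ ^ 2 + (2 * ⟪u ω, v ω⟫ + ‖v ω‖ ^ 2)) ∂ν :=
          integral_congr_ae (Filter.Eventually.of_forall fun ω => by
            dsimp only; rw [hpoint ω]; ring)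
      _ = ∫ ω, ‖u ω‖ ^ 2 ∂ν + ∫ ω, (2 * ⟪u ω, v ω⟫ + ‖v ω‖ ^ 2) ∂ν :=
          integral_add I2 ((Icross.const_mul 2).add I3)
      _ = ∫ ω, ‖u ω‖ ^ 2 ∂ν + (2 * ∫ ω, ⟪u ω, v ω⟫ ∂ν + ∫ ω, ‖v ω‖ ^ 2 ∂ν) := by
          rw [integral_add (Icross.const_mul 2) I3, integral_const_mul]
  have hvnn : 0 ≤ ∫ ω, ‖v ω‖ ^ 2 ∂ν := integral_nonneg fun ω => sq_nonneg _
  have h4 : ∫ ω, ‖f ω - ft ω‖ ^ 2 ∂ν = ∫ ω, ‖u ω‖ ^ 2 ∂ν := rfl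
  rw [h4, hsplit, hcross0]
  linarith


/-- Squared Wasserstein-2 distance: infimum over couplings of the expected squared distance. -/
noncomputable def W2sq {E : Type*} [MeasurableSpace E] [NormedAddCommGroup E]
    (p q : Measure E) : ℝ :=
  (⨅ γ : {γ : Measure (E × E) // γ.map Prod.fst = p ∧ γ.map Prod.snd = q},
    ∫⁻ z, (‖z.1 - z.2‖₊ : ENNReal) ^ 2 ∂(γ.1)).toReal

/-- If `(Z, J)` (on a probability space `(Ω, μ)`) minimizes the MSE
`E[‖Z − E[Z|φ(Z)]‖²]` among all (possibly stochastic) `M`-level quantizations of a source with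
the distribution of `Z` — stochastic maps being modeled by allowing an arbitrary probability
space carrying a copy `Z'` of `Z` and an arbitrary index variable `J'` — then this minimum MSE
equals the squared Wasserstein-2 distance between the distribution of `Z` and that of the
optimal MMSE estimate `Z̃* = E[Z|J]`. -/
theorem stmt0 {k M : ℕ} (hM : 0 < M)
    {Ω : Type} [MeasurableSpace Ω] (μ : Measure Ω) [IsProbabilityMeasure μ]
    (Z : Ω → EuclideanSpace ℝ (Fin k)) (J : Ω → Fin M)
    (hZmeas : Measurable Z) (hJmeas : Measurable J) (hZ2 : MemLp Z 2 μ)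
    (hopt : ∀ (Ω' : Type) (_ : MeasurableSpace Ω') (μ' : Measure Ω'),
      IsProbabilityMeasure μ' →
      ∀ (Z' : Ω' → EuclideanSpace ℝ (Fin k)) (J' : Ω' → Fin M),
        Measurable Z' → Measurable J' → μ'.map Z' = μ.map Z →
        ∫ ω, ‖Z ω - (μ[Z | MeasurableSpace.comap J inferInstance]) ω‖ ^ 2 ∂μ ≤
        ∫ ω, ‖Z' ω - (μ'[Z' | MeasurableSpace.comap J' inferInstance]) ω‖ ^ 2 ∂μ') :
    ∫ ω, ‖Z ω - (μ[Z | MeasurableSpace.comap J inferInstance]) ω‖ ^ 2 ∂μ =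
      W2sq (μ.map Z) (μ.map (μ[Z | MeasurableSpace.comap J inferInstance])) := by
  classical
  obtain ⟨g, hg⟩ := factor_through J
    (stronglyMeasurable_condExp (μ := μ) (f := Z)
      (m := MeasurableSpace.comap J inferInstance)).measurable
  set Zt := μ[Z|MeasurableSpace.comap J inferInstance] with hZt_def
  have hZtmeas : Measurable Zt := by rw [hg]; exact Measurable.of_discrete.comp hJmeas
  have hZt2 : MemLp Zt 2 μ := by rw [hg]; exact memℒp_comp_fin hJmeas g
  set F := ∫ ω, ‖Z ω - Zt ω‖ ^ 2 ∂μ with hF_def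
  have hFnn : 0 ≤ F := integral_nonneg fun ω => sq_nonneg _
  have hZZt2 : MemLp (fun ω => Z ω - Zt ω) 2 μ := hZ2.sub hZt2
  have hIsq : Integrable (fun ω => ‖Z ω - Zt ω‖ ^ 2) μ :=
    (memLp_two_iff_integrable_sq_norm hZZt2.aestronglyMeasurable).1 hZZt2
  have hofF : ENNReal.ofReal F = ∫⁻ ω, (‖Z ω - Zt ω‖₊ : ENNReal) ^ 2 ∂μ := by
    rw [hF_def, ofReal_integral_eq_lintegral_ofReal hIsq
      (Filter.Eventually.of_forall fun ω => sq_nonneg _)]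
    exact lintegral_congr fun ω => by
      rw [← enorm_eq_nnnorm, ← ofReal_norm, ← ENNReal.ofReal_pow (norm_nonneg _)]
  have hmapZ : IsProbabilityMeasure (μ.map Z) := Measure.isProbabilityMeasure_map hZmeas.aemeasurable
  -- the coupling given by the joint law
  have hpair : Measurable fun ω => (Z ω, Zt ω) := hZmeas.prodMk hZtmeas
  have hmarg1 : (μ.map fun ω => (Z ω, Zt ω)).map Prod.fst = μ.map Z := by
    rw [Measure.map_map measurable_fst hpair]; rfl
  have hmarg2 : (μ.map fun ω => (Z ω, Zt ω)).map Prod.snd = μ.map Zt := by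
    rw [Measure.map_map measurable_snd hpair]; rfl
  set γ₀ : {γ : Measure (EuclideanSpace ℝ (Fin k) × EuclideanSpace ℝ (Fin k)) //
      γ.map Prod.fst = μ.map Z ∧ γ.map Prod.snd = μ.map Zt} :=
    ⟨μ.map fun ω => (Z ω, Zt ω), hmarg1, hmarg2⟩ with hγ₀_def
  have hcost0 : ∫⁻ z, (‖z.1 - z.2‖₊ : ENNReal) ^ 2 ∂(γ₀.1) = ENNReal.ofReal F := by
    rw [hγ₀_def]
    erw [lintegral_map (f := fun z : EuclideanSpace ℝ (Fin k) × EuclideanSpace ℝ (Fin k) =>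
      (‖z.1 - z.2‖₊ : ENNReal) ^ 2)
      ((measurable_fst.sub measurable_snd).nnnorm.coe_nnreal_ennreal.pow_const 2) hpair]
    exact hofF.symm
  -- the selection map ι
  have hSfin : (Set.range g).Finite := Set.finite_range g
  set ι : EuclideanSpace ℝ (Fin k) → Fin M :=
    fun x => if h : ∃ j, g j = x then h.choose else (⟨0, hM⟩ : Fin M) with hι_def
  have hιg : ∀ j, g (ι (g j)) = g j := by
    intro j
    have h : ∃ j', g j' = g j := ⟨j, rfl⟩
    simp only [hι_def, dif_pos h]
    exact h.choose_spec
  have hιmeas : Measurable ι := by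
    apply measurable_to_countable'
    intro j
    have hsplit : ι ⁻¹' {j} = (ι ⁻¹' {j} ∩ Set.range g) ∪ (ι ⁻¹' {j} \ Set.range g) :=
      (Set.inter_union_diff _ _).symm
    rw [hsplit]
    refine ((hSfin.subset Set.inter_subset_right).measurableSet).union ?_
    by_cases hj : (⟨0, hM⟩ : Fin M) = j
    · have : ι ⁻¹' {j} \ Set.range g = (Set.range g)ᶜ := by
        ext x
        constructor
        · exact fun hx => hx.2
        · intro hx
          refine ⟨?_, hx⟩
          have hne : ¬ ∃ j', g j' = x := fun ⟨j', hj'⟩ => hx ⟨j', hj'⟩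
          simp only [hι_def, Set.mem_preimage, Set.mem_singleton_iff, dif_neg hne]
          exact hj
      rw [this]; exact hSfin.measurableSet.compl
    · have : ι ⁻¹' {j} \ Set.range g = ∅ := by
        ext x
        simp only [Set.mem_diff, Set.mem_preimage, Set.mem_singleton_iff,
          Set.mem_empty_iff_false, iff_false, not_and]
        intro hx hxr
        have hne : ¬ ∃ j', g j' = x := fun ⟨j', hj'⟩ => hxr ⟨j', hj'⟩
        rw [hι_def] at hx
        simp only [dif_neg hne] at hx
        exact hj hx
      rw [this]; exact MeasurableSet.empty
  -- lower bound: every coupling costs at least ofReal F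
  have key2 : ∀ γ : {γ : Measure (EuclideanSpace ℝ (Fin k) × EuclideanSpace ℝ (Fin k)) //
      γ.map Prod.fst = μ.map Z ∧ γ.map Prod.snd = μ.map Zt},
      ENNReal.ofReal F ≤ ∫⁻ z, (‖z.1 - z.2‖₊ : ENNReal) ^ 2 ∂(γ.1) := by
    rintro ⟨ν, hν1, hν2⟩
    by_cases hfin : ∫⁻ z, (‖z.1 - z.2‖₊ : ENNReal) ^ 2 ∂ν = ⊤
    · simp only [hfin]; exact le_top
    have hprob : IsProbabilityMeasure ν := by
      constructor
      have h0 : ν Set.univ = (μ.map Z) Set.univ := by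
        rw [← hν1, Measure.map_apply measurable_fst MeasurableSet.univ, Set.preimage_univ]
      rw [h0, measure_univ]
    set J' : EuclideanSpace ℝ (Fin k) × EuclideanSpace ℝ (Fin k) → Fin M :=
      fun z => ι z.2 with hJ'_def
    have hJ'm : Measurable J' := hιmeas.comp measurable_snd
    have hid : MemLp id 2 (μ.map Z) :=
      (memLp_map_measure_iff aestronglyMeasurable_id hZmeas.aemeasurable).2 hZ2
    have h5 : MemLp id 2 (ν.map Prod.fst) := by rw [hν1]; exact hid
    have hZ'2 : MemLp (Prod.fst : EuclideanSpace ℝ (Fin k) × EuclideanSpace ℝ (Fin k) →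
        EuclideanSpace ℝ (Fin k)) 2 ν :=
      (memLp_map_measure_iff aestronglyMeasurable_id measurable_fst.aemeasurable).1 h5
    have hstep1 : F ≤ ∫ z, ‖z.1 -
        (ν[Prod.fst | MeasurableSpace.comap J' inferInstance]) z‖ ^ 2 ∂ν :=
      hopt _ _ ν hprob Prod.fst J' measurable_fst hJ'm hν1
    have hstep2 : ∫ z, ‖z.1 -
        (ν[Prod.fst | MeasurableSpace.comap J' inferInstance]) z‖ ^ 2 ∂ν ≤
        ∫ z, ‖z.1 - g (J' z)‖ ^ 2 ∂ν :=
      condexp_min ν Prod.fst hZ'2 hJ'm g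
    have hae : ∀ᵐ z ∂ν, g (ι z.2) = z.2 := by
      have h0 : μ.map Zt (Set.range g)ᶜ = 0 := by
        rw [Measure.map_apply hZtmeas hSfin.measurableSet.compl]
        have : Zt ⁻¹' (Set.range g)ᶜ = ∅ := by
          ext ω
          simp [hg, Function.comp_apply]
        rw [this, measure_empty]
      have h1 : ν (Prod.snd ⁻¹' (Set.range g)ᶜ) = 0 := by
        rw [← Measure.map_apply measurable_snd hSfin.measurableSet.compl, hν2, h0]
      have h2 : ∀ᵐ z ∂ν, z.2 ∈ Set.range g := by
        apply ae_iff.mpr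
        exact h1
      filter_upwards [h2] with z hz
      obtain ⟨j, hj⟩ := hz
      rw [← hj]
      exact hιg j
    have hstep3 : ∫ z, ‖z.1 - g (J' z)‖ ^ 2 ∂ν = ∫ z, ‖z.1 - z.2‖ ^ 2 ∂ν :=
      integral_congr_ae (hae.mono fun z hz => by rw [hJ'_def]; dsimp only; rw [hz])
    have hint4 : Integrable (fun z => ‖z.1 - z.2‖ ^ 2) ν := by
      refine ⟨((measurable_fst.sub measurable_snd).norm.pow
        measurable_const).aestronglyMeasurable, ?_⟩
      rw [hasFiniteIntegral_iff_ofReal (Filter.Eventually.of_forall fun z => sq_nonneg _)]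
      have heq : ∫⁻ z, ENNReal.ofReal (‖z.1 - z.2‖ ^ 2) ∂ν =
          ∫⁻ z, (‖z.1 - z.2‖₊ : ENNReal) ^ 2 ∂ν :=
        lintegral_congr fun z => by
          rw [← enorm_eq_nnnorm, ← ofReal_norm, ← ENNReal.ofReal_pow (norm_nonneg _)]
      rw [heq]
      exact lt_top_iff_ne_top.mpr hfin
    have hstep4 : ENNReal.ofReal (∫ z, ‖z.1 - z.2‖ ^ 2 ∂ν) =
        ∫⁻ z, (‖z.1 - z.2‖₊ : ENNReal) ^ 2 ∂ν := by
      rw [ofReal_integral_eq_lintegral_ofReal hint4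
        (Filter.Eventually.of_forall fun z => sq_nonneg _)]
      exact lintegral_congr fun z => by
        rw [← enorm_eq_nnnorm, ← ofReal_norm, ← ENNReal.ofReal_pow (norm_nonneg _)]
    calc ENNReal.ofReal F ≤ ENNReal.ofReal (∫ z, ‖z.1 - z.2‖ ^ 2 ∂ν) :=
          ENNReal.ofReal_le_ofReal (by rw [← hstep3]; exact hstep1.trans hstep2)
      _ = ∫⁻ z, (‖z.1 - z.2‖₊ : ENNReal) ^ 2 ∂ν := hstep4
  have hinf : (⨅ γ : {γ : Measure (EuclideanSpace ℝ (Fin k) × EuclideanSpace ℝ (Fin k)) //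
      γ.map Prod.fst = μ.map Z ∧ γ.map Prod.snd = μ.map Zt},
      ∫⁻ z, (‖z.1 - z.2‖₊ : ENNReal) ^ 2 ∂(γ.1)) = ENNReal.ofReal F :=
    le_antisymm ((iInf_le _ γ₀).trans_eq hcost0) (le_iInf key2)
  show F = W2sq (μ.map Z) (μ.map Zt)
  unfold W2sq
  rw [hinf, ENNReal.toReal_ofReal hFnn]
end

section
/- Let Z be a square-integrable random vector in R^k and M a positive integer. Over all (possibly stochastic) encoder–decoder pairs φ: R^k → {0,...,M-1}, ψ: {0,...,M-1} → R^k, with Z' = ψ(φ(Z)) and Z̃ = E[Z | φ(Z)], the minimum of E[‖Z − Z'‖²] subject to the constraint p_{Z'} = p_Z equals twice the unconstrained minimum of E[‖Z − Z̃‖²] over encoders φ. That is, perfect perceptual quality doubles the minimum achievable distortion. -/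
open MeasureTheory ProbabilityTheory Real Set Filter

noncomputable section
namespace StmtAux

/-- uniform measure on (0,1) -/
def unif : Measure ℝ := volume.restrict (Set.Ioo 0 1)

instance : IsProbabilityMeasure unif := by constructor; simp [unif]

lemma measure_eq_of_subsingleton {X : Type*} [MeasurableSpace X] [Subsingleton X]
    (μ ν : Measure X) [IsProbabilityMeasure μ] [IsProbabilityMeasure ν] : μ = ν := by
  ext s hs
  rcases s.eq_empty_or_nonempty with h | h
  · simp [h]
  · obtain ⟨x, hx⟩ := h
    have : s = Set.univ := by
      ext y; simp only [Set.mem_univ, iff_true]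
      rwa [Subsingleton.elim y x]
    simp [this]

/-- inverse transform sampling on ℝ -/
lemma sampler_real (ρ : Measure ℝ) [IsProbabilityMeasure ρ] :
    ∃ f : ℝ → ℝ, Measurable f ∧ unif.map f = ρ := by
  classical
  set F : ℝ → ℝ := fun x => cdf ρ x with hF
  have hFmono : Monotone F := monotone_cdf ρ
  have hF0 : ∀ x, 0 ≤ F x := fun x => cdf_nonneg ρ x
  have hF1 : ∀ x, F x ≤ 1 := fun x => cdf_le_one ρ x
  set S : ℝ → Set ℝ := fun u => {x | u ≤ F x} with hS
  have hSne : ∀ u : ℝ, u < 1 → (S u).Nonempty := by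
    intro u hu
    obtain ⟨x, hx⟩ := ((tendsto_cdf_atTop (μ := ρ)).eventually (eventually_gt_nhds hu)).exists
    exact ⟨x, le_of_lt hx⟩
  have hSbdd : ∀ u : ℝ, 0 < u → BddBelow (S u) := by
    intro u hu
    obtain ⟨x₀, hx₀⟩ := ((tendsto_cdf_atBot (μ := ρ)).eventually (eventually_lt_nhds hu)).exists
    refine ⟨x₀, fun y hy => ?_⟩
    by_contra hc
    push_neg at hc
    exact absurd (le_trans hy (hFmono hc.le)) (not_le.2 hx₀)
  set g : ℝ → ℝ := fun u => sInf (S u) with hg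
  have hkey : ∀ u : ℝ, u ∈ Set.Ioo (0:ℝ) 1 → ∀ x : ℝ, (g u ≤ x ↔ u ≤ F x) := by
    intro u hu x
    constructor
    · intro hgx
      have hforall : ∀ z ∈ Set.Ioi x, u ≤ F z := by
        intro z hz
        obtain ⟨y, hyS, hy⟩ := Real.lt_sInf_add_pos (hSne u hu.2) (show (0:ℝ) < z - x by linarith [hz.out])
        have hyz : y < z := by simp only [hg] at hgx; linarith
        exact le_trans hyS (hFmono hyz.le)
      have htend : Tendsto F (nhdsWithin x (Set.Ioi x)) (nhds (F x)) :=
        ((cdf ρ).right_continuous x).tendsto.mono_left (nhdsWithin_mono x Set.Ioi_subset_Ici_self)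
      exact ge_of_tendsto htend (eventually_nhdsWithin_of_forall hforall)
    · intro hx
      exact csInf_le (hSbdd u hu.1) hx
  set c₀ : ℝ := g (1/2) with hc₀
  set f : ℝ → ℝ := fun u => if u ∈ Set.Ioo (0:ℝ) 1 then g u else c₀ with hf
  have hpre : ∀ a : ℝ, f ⁻¹' (Set.Iic a) =
      (Set.Ioo (0:ℝ) 1 ∩ Set.Iic (F a)) ∪ (if c₀ ≤ a then (Set.Ioo (0:ℝ) 1)ᶜ else ∅) := by
    intro a
    ext u
    by_cases hu : u ∈ Set.Ioo (0:ℝ) 1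
    · have hk := hkey u hu a
      simp only [Set.mem_preimage, Set.mem_Iic, hf, if_pos hu, Set.mem_union, Set.mem_inter_iff,
        Set.mem_compl_iff]
      split_ifs with hca
      · constructor
        · intro h; exact Or.inl ⟨hu, hk.mp h⟩
        · rintro (⟨_, h⟩ | h)
          · exact hk.mpr h
          · exact absurd hu h
      · simp only [Set.mem_empty_iff_false, or_false]
        exact ⟨fun h => ⟨hu, hk.mp h⟩, fun h => hk.mpr h.2⟩
    · simp only [Set.mem_preimage, Set.mem_Iic, hf, if_neg hu, Set.mem_union, Set.mem_inter_iff,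
        Set.mem_compl_iff]
      split_ifs with hca
      · exact iff_of_true hca (Or.inr hu)
      · refine iff_of_false hca ?_
        rintro (⟨h, _⟩ | h)
        · exact hu h
        · exact h
  have hfm : Measurable f := by
    apply measurable_of_Iic
    intro a
    rw [hpre a]
    split_ifs <;> measurability
  refine ⟨f, hfm, ?_⟩
  have : IsProbabilityMeasure (unif.map f)  := Measure.isProbabilityMeasure_map hfm.aemeasurable
  refine Measure.ext_of_Iic (unif.map f) ρ (fun a => ?_)
  rw [Measure.map_apply hfm measurableSet_Iic, hpre a]
  have hset : ((Set.Ioo (0:ℝ) 1 ∩ Set.Iic (F a)) ∪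
      (if c₀ ≤ a then (Set.Ioo (0:ℝ) 1)ᶜ else ∅)) ∩ Set.Ioo (0:ℝ) 1
      = Set.Ioo (0:ℝ) 1 ∩ Set.Iic (F a) := by
    split_ifs <;> ext u <;> simp only [Set.mem_inter_iff, Set.mem_union, Set.mem_compl_iff,
      Set.mem_empty_iff_false] <;> tauto
  rw [show unif = volume.restrict (Set.Ioo 0 1) from rfl, Measure.restrict_apply' measurableSet_Ioo,
    hset]
  rw [← ofReal_cdf (μ := ρ) a]
  by_cases hFa : F a < 1
  · have : Set.Ioo (0:ℝ) 1 ∩ Set.Iic (F a) = Set.Ioc 0 (F a) := by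
      ext u
      simp only [Set.mem_inter_iff, Set.mem_Ioo, Set.mem_Iic, Set.mem_Ioc]
      constructor
      · rintro ⟨⟨h1, _⟩, h3⟩; exact ⟨h1, h3⟩
      · rintro ⟨h1, h2⟩; exact ⟨⟨h1, lt_of_le_of_lt h2 hFa⟩, h2⟩
    rw [this, Real.volume_Ioc]
    simp [hF]
  · have hFa1 : F a = 1 := le_antisymm (hF1 a) (not_lt.1 hFa)
    have : Set.Ioo (0:ℝ) 1 ∩ Set.Iic (F a) = Set.Ioo 0 1 := by
      rw [Set.inter_eq_left]
      intro u hu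
      simp only [Set.mem_Iic, hFa1]
      exact hu.2.le
    rw [this, Real.volume_Ioo]
    simp only [hF] at hFa1 ⊢
    rw [hFa1]
    norm_num

end StmtAux

open MeasureTheory ProbabilityTheory Real Set Filter

noncomputable section
namespace StmtAux

variable {k : ℕ}

local notation "E" k => EuclideanSpace ℝ (Fin k)

lemma euclidean_subsingleton : Subsingleton (EuclideanSpace ℝ (Fin 0)) :=
  ⟨fun a b => by ext i; exact i.elim0⟩

lemma not_countable_real : ¬ Countable ℝ := fun h =>
  Cardinal.not_countable_real (@Set.countable_univ ℝ h)

lemma euclidean_not_countable (hk : k ≠ 0) : ¬ Countable (EuclideanSpace ℝ (Fin k)) := by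
  intro h
  haveI : Countable (EuclideanSpace ℝ (Fin k)) := h
  have hinj : Function.Injective (fun r : ℝ => (WithLp.toLp 2 (fun _ => r) : EuclideanSpace ℝ (Fin k))) := by
    intro a b hab
    have := congrArg (fun x : EuclideanSpace ℝ (Fin k) => x ⟨0, Nat.pos_of_ne_zero hk⟩) hab
    exact this
  exact not_countable_real (hinj.countable)

/-- sampler for probability measures on Euclidean space -/
lemma sampler (ρ : Measure (EuclideanSpace ℝ (Fin k))) [IsProbabilityMeasure ρ] :
    ∃ f : ℝ → EuclideanSpace ℝ (Fin k), Measurable f ∧ unif.map f = ρ := by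
  by_cases hk : k = 0
  · subst hk
    haveI := euclidean_subsingleton
    refine ⟨fun _ => 0, measurable_const, ?_⟩
    haveI : IsProbabilityMeasure (unif.map (fun _ => (0 : EuclideanSpace ℝ (Fin 0)))) :=
      Measure.isProbabilityMeasure_map measurable_const.aemeasurable
    exact measure_eq_of_subsingleton _ _
  · have hnc := euclidean_not_countable hk
    let ι : (EuclideanSpace ℝ (Fin k)) ≃ᵐ ℝ :=
      PolishSpace.measurableEquivOfNotCountable hnc not_countable_real
    haveI : IsProbabilityMeasure (ρ.map ι)  := Measure.isProbabilityMeasure_map ι.measurable.aemeasurable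
    obtain ⟨f₀, hf₀m, hf₀⟩ := sampler_real (ρ.map ι)
    refine ⟨fun u => ι.symm (f₀ u), ι.symm.measurable.comp hf₀m, ?_⟩
    rw [show (fun u => ι.symm (f₀ u)) = (ι.symm ∘ f₀) from rfl,
      ← Measure.map_map ι.symm.measurable hf₀m, hf₀, Measure.map_map ι.symm.measurable
        ι.measurable]
    simp [Function.comp_def]

end StmtAux

open MeasureTheory ProbabilityTheory Real Set Filter
open scoped RealInnerProductSpace

noncomputable section
namespace StmtAux

variable {k M : ℕ} {Ω' : Type} [MeasurableSpace Ω'] {μ' : Measure Ω'}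

local notation "E" => EuclideanSpace ℝ (Fin k)

/-- mean of `Z'` on the cell `J = j` -/
def cellMean (μ' : Measure Ω') (J : Ω' → Fin M) (Z' : Ω' → E) (j : Fin M) : E :=
  (μ' (J ⁻¹' {j})).toReal⁻¹ • ∫ ω in J ⁻¹' {j}, Z' ω ∂μ'

lemma meas_cell {J : Ω' → Fin M} (hJ : Measurable J) (j : Fin M) :
    MeasurableSet (J ⁻¹' {j}) := hJ (measurableSet_singleton j)

lemma setIntegral_cell [IsFiniteMeasure μ'] (J : Ω' → Fin M) (Z' : Ω' → E) (j : Fin M) :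
    ∫ ω in J ⁻¹' {j}, Z' ω ∂μ' = (μ' (J ⁻¹' {j})).toReal • cellMean μ' J Z' j := by
  by_cases h : μ' (J ⁻¹' {j}) = 0
  · rw [cellMean, h]
    simp only [ENNReal.toReal_zero, zero_smul, smul_zero]
    rw [Measure.restrict_eq_zero.mpr h]
    simp
  · rw [cellMean, smul_smul, mul_inv_cancel₀, one_smul]
    exact ENNReal.toReal_ne_zero.mpr ⟨h, measure_ne_top _ _⟩

lemma disj_cells (J : Ω' → Fin M) :
    ((Finset.univ : Finset (Fin M)) : Set (Fin M)).Pairwise (Function.onFun Disjoint fun j => J ⁻¹' {j}) :=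
  fun i _ j _ hij => Set.disjoint_left.2 fun ω hi hj => hij (by
    simp only [Set.mem_preimage, Set.mem_singleton_iff] at hi hj
    rw [← hi, ← hj])

lemma integral_partition {G : Type*} [NormedAddCommGroup G] [NormedSpace ℝ G]
    {J : Ω' → Fin M} (hJ : Measurable J) {f : Ω' → G} (hf : Integrable f μ') :
    ∫ ω, f ω ∂μ' = ∑ j : Fin M, ∫ ω in J ⁻¹' {j}, f ω ∂μ' := by
  have hcover : (⋃ j ∈ (Finset.univ : Finset (Fin M)), J ⁻¹' {j}) = Set.univ := by
    ext ω; simp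
  rw [← setIntegral_univ, ← hcover]
  exact integral_biUnion_finset Finset.univ (fun j _ => meas_cell hJ j) (disj_cells J)
    (fun j _ => hf.integrableOn)

lemma measurable_fin_fun {X : Type*} [MeasurableSpace X] (g : Fin M → X) : Measurable g :=
  measurable_from_top

/-- functions factoring through `Fin M` are in every `MemLp` -/
lemma memLp_comp_fin [IsFiniteMeasure μ'] (g : Fin M → E) {J : Ω' → Fin M} (hJ : Measurable J) (p : ENNReal) :
    MemLp (fun ω => g (J ω)) p μ' := by
  refine MemLp.of_bound ((measurable_fin_fun g).comp hJ).aestronglyMeasurable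
    (∑ j : Fin M, ‖g j‖) (Eventually.of_forall fun ω => ?_)
  exact Finset.single_le_sum (f := fun j => ‖g j‖) (fun j _ => norm_nonneg _) (Finset.mem_univ _)

/-- inner product of two L² functions is integrable -/
lemma inner_integrable {F G : Ω' → E} (hF : MemLp F 2 μ') (hG : MemLp G 2 μ') :
    Integrable (fun ω => ⟪F ω, G ω⟫) μ' := by
  have h1 : Integrable (fun ω => ‖F ω‖ ^ 2) μ' := (memLp_two_iff_integrable_sq_norm hF.1).1 hF
  have h2 : Integrable (fun ω => ‖G ω‖ ^ 2) μ' := (memLp_two_iff_integrable_sq_norm hG.1).1 hG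
  refine Integrable.mono' (((h1.add h2).div_const 2)) (hF.1.inner hG.1)
    (Eventually.of_forall fun ω => ?_)
  have h3 : |⟪F ω, G ω⟫| ≤ ‖F ω‖ * ‖G ω‖ := abs_real_inner_le_norm _ _
  have h4 : 2 * (‖F ω‖ * ‖G ω‖) ≤ ‖F ω‖ ^ 2 + ‖G ω‖ ^ 2 := by
    have := two_mul_le_add_sq ‖F ω‖ ‖G ω‖
    linarith
  rw [Real.norm_eq_abs]
  simp only [Pi.add_apply]
  linarith

/-- transfer `MemLp` along equality of distributions -/
lemma memLp_transfer {Ω : Type*} [MeasurableSpace Ω] {μ : Measure Ω}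
    {Z : Ω → E} {Z' : Ω' → E} (hZ : Measurable Z) (hZ' : Measurable Z')
    (hmap : μ'.map Z' = μ.map Z) (hZ2 : MemLp Z 2 μ) : MemLp Z' 2 μ' := by
  have h1 : MemLp (id : E → E) 2 (μ.map Z) :=
    (memLp_map_measure_iff aestronglyMeasurable_id hZ.aemeasurable).2 hZ2
  rw [← hmap] at h1
  exact (memLp_map_measure_iff aestronglyMeasurable_id hZ'.aemeasurable).1 h1

/-- The conditional expectation w.r.t. the σ-algebra generated by a `Fin M`-valued map
is the cell-mean function. -/
lemma condexp_eq_cellMean [IsProbabilityMeasure μ'] {J : Ω' → Fin M} (hJ : Measurable J)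
    {Z' : Ω' → E} (hZ2 : MemLp Z' 2 μ') :
    μ'[Z' | MeasurableSpace.comap J inferInstance] =ᵐ[μ'] fun ω => cellMean μ' J Z' (J ω) := by
  classical
  have hm : MeasurableSpace.comap J inferInstance ≤ (inferInstance : MeasurableSpace Ω') := by
    rintro s ⟨t, _, rfl⟩
    exact hJ (Set.Countable.measurableSet (Set.to_countable t))
  set g : Ω' → E := fun ω => cellMean μ' J Z' (J ω) with hgdef
  have hgint : Integrable g μ' := (memLp_comp_fin _ hJ 1).integrable le_rfl
  have hdecomp : ∀ t : Set (Fin M), J ⁻¹' t = ⋃ j ∈ (Set.toFinite t).toFinset, J ⁻¹' {j} := by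
    intro t; ext ω
    simp only [Set.mem_preimage, Set.mem_iUnion, Set.Finite.mem_toFinset,
      Set.mem_singleton_iff, exists_prop, exists_eq_right']
  have hseteq : ∀ s : Set Ω', MeasurableSet[MeasurableSpace.comap J inferInstance] s →
      ∫ ω in s, g ω ∂μ' = ∫ ω in s, Z' ω ∂μ' := by
    rintro s ⟨t, _, rfl⟩
    rw [hdecomp t]
    rw [integral_biUnion_finset _ (fun j _ => meas_cell hJ j)
        ((disj_cells J).mono (by intro x _; exact Finset.mem_coe.mp (Finset.mem_univ x)))
        (fun j _ => hgint.integrableOn),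
      integral_biUnion_finset _ (fun j _ => meas_cell hJ j)
        ((disj_cells J).mono (by intro x _; exact Finset.mem_coe.mp (Finset.mem_univ x)))
        (fun j _ => (hZ2.integrable one_le_two).integrableOn)]
    refine Finset.sum_congr rfl fun j _ => ?_
    rw [setIntegral_cell J Z' j]
    rw [setIntegral_congr_fun (meas_cell hJ j)
      (show Set.EqOn g (fun _ => cellMean μ' J Z' j) (J ⁻¹' {j}) from fun ω hω => by
        simp only [hgdef]
        rw [show J ω = j from hω]),
      setIntegral_const, measureReal_def]
  symm
  refine ae_eq_condExp_of_forall_setIntegral_eq hm (hZ2.integrable one_le_two)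
    (fun s _ _ => hgint.integrableOn) (fun s hs _ => hseteq s hs) ?_
  refine ⟨g, ?_, EventuallyEq.rfl⟩
  have : Measurable[MeasurableSpace.comap J inferInstance] J :=
    fun t _ => ⟨t, Set.Countable.measurableSet (Set.to_countable t), rfl⟩
  exact (Measurable.stronglyMeasurable
    ((measurable_fin_fun (cellMean μ' J Z')).comp this))

/-- Pythagoras-type expansion of the quadratic distortion -/
lemma integral_sq_expand {F G H : Ω' → E}
    (hF : MemLp F 2 μ') (hG : MemLp G 2 μ') (hH : MemLp H 2 μ') :
    ∫ ω, ‖F ω - G ω‖ ^ 2 ∂μ' = (∫ ω, ‖F ω - H ω‖ ^ 2 ∂μ') + (∫ ω, ‖H ω - G ω‖ ^ 2 ∂μ')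
      + 2 * ∫ ω, ⟪F ω - H ω, H ω - G ω⟫ ∂μ' := by
  have h1 : Integrable (fun ω => ‖F ω - H ω‖ ^ 2) μ' :=
    (memLp_two_iff_integrable_sq_norm (hF.1.sub hH.1)).1 (hF.sub hH)
  have h2 : Integrable (fun ω => ‖H ω - G ω‖ ^ 2) μ' :=
    (memLp_two_iff_integrable_sq_norm (hH.1.sub hG.1)).1 (hH.sub hG)
  have h3 : Integrable (fun ω => ⟪F ω - H ω, H ω - G ω⟫) μ' :=
    inner_integrable (hF.sub hH) (hH.sub hG)
  have hpt : ∀ ω, ‖F ω - G ω‖ ^ 2 =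
      ‖F ω - H ω‖ ^ 2 + ‖H ω - G ω‖ ^ 2 + 2 * ⟪F ω - H ω, H ω - G ω⟫ := by
    intro ω
    have : F ω - G ω = (F ω - H ω) + (H ω - G ω) := by abel
    rw [this, @norm_add_sq_real]
    ring
  simp_rw [hpt]
  have hA : Integrable (fun ω => ‖F ω - H ω‖ ^ 2 + ‖H ω - G ω‖ ^ 2) μ' := h1.add h2
  have hB : Integrable (fun ω => 2 * ⟪F ω - H ω, H ω - G ω⟫) μ' := h3.const_mul 2
  rw [show (∫ ω, (‖F ω - H ω‖ ^ 2 + ‖H ω - G ω‖ ^ 2 + 2 * ⟪F ω - H ω, H ω - G ω⟫) ∂μ')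
      = ∫ ω, ((fun ω => ‖F ω - H ω‖ ^ 2 + ‖H ω - G ω‖ ^ 2) ω
        + (fun ω => 2 * ⟪F ω - H ω, H ω - G ω⟫) ω) ∂μ' from rfl,
    integral_add hA hB, integral_add h1 h2, integral_const_mul]

end StmtAux

open MeasureTheory ProbabilityTheory Real Set Filter
open scoped RealInnerProductSpace

noncomputable section
namespace StmtAux

variable {k M : ℕ} {Ω' : Type} [MeasurableSpace Ω'] {μ' : Measure Ω'}

local notation "E" => EuclideanSpace ℝ (Fin k)

lemma cell_center [IsProbabilityMeasure μ'] {J : Ω' → Fin M} (hJ : Measurable J)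
    {W : Ω' → E} (hW2 : MemLp W 2 μ') (j : Fin M) :
    ∫ ω in J ⁻¹' {j}, (W ω - cellMean μ' J W j) ∂μ' = 0 := by
  rw [integral_sub ((hW2.integrable one_le_two).integrableOn)
    (integrableOn_const (measure_lt_top _ _).ne), setIntegral_const, measureReal_def,
    setIntegral_cell J W j, sub_self]

lemma cross_zero_of_cellconst [IsProbabilityMeasure μ'] {J : Ω' → Fin M} (hJ : Measurable J)
    {W : Ω' → E} (hW2 : MemLp W 2 μ') (h : Fin M → E)
    (hint : Integrable (fun ω => ⟪W ω - cellMean μ' J W (J ω), h (J ω)⟫) μ') :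
    ∫ ω, ⟪W ω - cellMean μ' J W (J ω), h (J ω)⟫ ∂μ' = 0 := by
  rw [integral_partition hJ hint]
  refine Finset.sum_eq_zero fun j _ => ?_
  rw [setIntegral_congr_fun (meas_cell hJ j)
    (show Set.EqOn (fun ω => ⟪W ω - cellMean μ' J W (J ω), h (J ω)⟫)
      (fun ω => ⟪h j, W ω - cellMean μ' J W j⟫) (J ⁻¹' {j}) from fun ω hω => by
        simp only []
        rw [show J ω = j from hω, real_inner_comm])]
  rw [integral_inner (f := fun ω => W ω - cellMean μ' J W j)
    (((hW2.integrable one_le_two).integrableOn).sub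
    (integrableOn_const (measure_lt_top _ _).ne)) (h j)]
  rw [show (∫ ω in J ⁻¹' {j}, (W ω - cellMean μ' J W j) ∂μ') = 0 from cell_center hJ hW2 j,
    inner_zero_right]

/-- The main lower-bound decomposition lemma. -/
lemma lower_bound {Ω : Type*} [MeasurableSpace Ω]
    (μ : Measure Ω) [IsProbabilityMeasure μ] [IsProbabilityMeasure μ']
    {Z : Ω → E} (hZmeas : Measurable Z) (hZ2 : MemLp Z 2 μ)
    {Z' : Ω' → E} {V U : Ω' → ℝ} {e : (EuclideanSpace ℝ (Fin k)) × ℝ → Fin M}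
    {d : Fin M × ℝ → EuclideanSpace ℝ (Fin k)}
    (hZ' : Measurable Z') (hV : Measurable V) (hU : Measurable U) (he : Measurable e)
    (hd : Measurable d) (hmapZ' : μ'.map Z' = μ.map Z)
    (hindep : IndepFun (fun ω => (Z' ω, e (Z' ω, V ω))) U μ')
    (hmapZ'' : μ'.map (fun ω => d (e (Z' ω, V ω), U ω)) = μ.map Z) :
    (∫ ω, ‖Z' ω - (μ'[Z' | MeasurableSpace.comap (fun ω => e (Z' ω, V ω)) inferInstance]) ω‖ ^ 2 ∂μ')
    + (∫ ω, ‖d (e (Z' ω, V ω), U ω) -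
        (μ'[(fun ω => d (e (Z' ω, V ω), U ω)) |
          MeasurableSpace.comap (fun ω => e (Z' ω, V ω)) inferInstance]) ω‖ ^ 2 ∂μ')
    ≤ ∫ ω, ‖Z' ω - d (e (Z' ω, V ω), U ω)‖ ^ 2 ∂μ' := by
  classical
  set J : Ω' → Fin M := fun ω => e (Z' ω, V ω) with hJdef
  have hJ : Measurable J := he.comp (hZ'.prodMk hV)
  set Z'' : Ω' → E := fun ω => d (J ω, U ω) with hZ''def
  have hZ''m : Measurable Z'' := hd.comp (hJ.prodMk hU)
  have hZ'2 : MemLp Z' 2 μ' := memLp_transfer hZmeas hZ' hmapZ' hZ2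
  have hZ''2 : MemLp Z'' 2 μ' := memLp_transfer hZmeas hZ''m hmapZ'' hZ2
  set m : Fin M → E := cellMean μ' J Z' with hmdef
  set m'' : Fin M → E := cellMean μ' J Z'' with hm''def
  set Zt : Ω' → E := fun ω => m (J ω) with hZtdef
  set gt : Ω' → E := fun ω => m'' (J ω) with hgtdef
  have hZtL2 : MemLp Zt 2 μ' := memLp_comp_fin m hJ 2
  have hgtL2 : MemLp gt 2 μ' := memLp_comp_fin m'' hJ 2
  -- cross term 1 vanishes
  have hcross1_int : Integrable (fun ω => ⟪Z' ω - Zt ω, Zt ω - Z'' ω⟫) μ' :=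
    inner_integrable (hZ'2.sub hZtL2) (hZtL2.sub hZ''2)
  have hcross1 : ∫ ω, ⟪Z' ω - Zt ω, Zt ω - Z'' ω⟫ ∂μ' = 0 := by
    set X : Ω' → E × Fin M := fun ω => (Z' ω, J ω) with hXdef
    have hXm : Measurable X := hZ'.prodMk hJ
    haveI : IsProbabilityMeasure (μ'.map X)  := Measure.isProbabilityMeasure_map hXm.aemeasurable
    haveI : IsProbabilityMeasure (μ'.map U)  := Measure.isProbabilityMeasure_map hU.aemeasurable
    set h : (E × Fin M) × ℝ → ℝ := fun q => ⟪q.1.1 - m q.1.2, m q.1.2 - d (q.1.2, q.2)⟫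
      with hhdef
    have hh : Measurable h := by
      apply Measurable.inner
      · exact (measurable_fst.comp measurable_fst).sub
          ((measurable_fin_fun m).comp (measurable_snd.comp measurable_fst))
      · exact ((measurable_fin_fun m).comp (measurable_snd.comp measurable_fst)).sub
          (hd.comp ((measurable_snd.comp measurable_fst).prodMk measurable_snd))
    have hmapeq : μ'.map (fun ω => (X ω, U ω)) = (μ'.map X).prod (μ'.map U) :=
      (indepFun_iff_map_prod_eq_prod_map_map hXm.aemeasurable hU.aemeasurable).1 hindep
    have hint' : Integrable h ((μ'.map X).prod (μ'.map U)) := by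
      rw [← hmapeq]
      exact (integrable_map_measure hh.aestronglyMeasurable
        (hXm.prodMk hU).aemeasurable).2 hcross1_int
    have step1 : ∫ ω, ⟪Z' ω - Zt ω, Zt ω - Z'' ω⟫ ∂μ'
        = ∫ q, h q ∂(μ'.map (fun ω => (X ω, U ω))) := by
      rw [integral_map (hXm.prodMk hU).aemeasurable hh.aestronglyMeasurable]
    rw [step1, hmapeq, integral_prod_symm h hint']
    have hinner : ∀ u : ℝ, ∫ x, h (x, u) ∂(μ'.map X) = 0 := by
      intro u
      have : ∫ x, h (x, u) ∂(μ'.map X) = ∫ ω, h (X ω, u) ∂μ' := by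
        rw [integral_map hXm.aemeasurable]
        exact (hh.comp (measurable_id.prodMk measurable_const)).aestronglyMeasurable
      rw [this]
      exact cross_zero_of_cellconst hJ hZ'2 (fun j => m j - d (j, u))
        (inner_integrable (hZ'2.sub hZtL2)
          (memLp_comp_fin (fun j => m j - d (j, u)) hJ 2))
    simp only [hinner, integral_zero]
  -- cross term 2 vanishes
  have hcross2 : ∫ ω, ⟪Z'' ω - gt ω, gt ω - Zt ω⟫ ∂μ' =  0 :=
    cross_zero_of_cellconst hJ hZ''2 (fun j => m'' j - m j)
      (inner_integrable (hZ''2.sub hgtL2) (memLp_comp_fin (fun j => m'' j - m j) hJ 2))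
  have expand1 : ∫ ω, ‖Z' ω - Z'' ω‖ ^ 2 ∂μ' = (∫ ω, ‖Z' ω - Zt ω‖ ^ 2 ∂μ')
      + ∫ ω, ‖Zt ω - Z'' ω‖ ^ 2 ∂μ' := by
    rw [integral_sq_expand hZ'2 hZ''2 hZtL2, hcross1]
    ring
  have expand2 : ∫ ω, ‖Z'' ω - Zt ω‖ ^ 2 ∂μ' = (∫ ω, ‖Z'' ω - gt ω‖ ^ 2 ∂μ')
      + ∫ ω, ‖gt ω - Zt ω‖ ^ 2 ∂μ' := by
    rw [integral_sq_expand hZ''2 hZtL2 hgtL2, hcross2]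
    ring
  have hflip : ∫ ω, ‖Zt ω - Z'' ω‖ ^ 2 ∂μ' = ∫ ω, ‖Z'' ω - Zt ω‖ ^ 2 ∂μ' := by
    congr 1; funext ω; rw [norm_sub_rev]
  -- identify the condexp integrals
  have hceq1 : (∫ ω, ‖Z' ω -
      (μ'[Z' | MeasurableSpace.comap (fun ω => e (Z' ω, V ω)) inferInstance]) ω‖ ^ 2 ∂μ')
      = ∫ ω, ‖Z' ω - Zt ω‖ ^ 2 ∂μ' := by
    refine integral_congr_ae ?_
    filter_upwards [condexp_eq_cellMean hJ hZ'2] with ω hω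
    rw [show (μ'[Z' | MeasurableSpace.comap (fun ω => e (Z' ω, V ω)) inferInstance]) ω
      = (μ'[Z' | MeasurableSpace.comap J inferInstance]) ω from rfl, hω]
  have hceq2 : (∫ ω, ‖d (e (Z' ω, V ω), U ω) -
      (μ'[(fun ω => d (e (Z' ω, V ω), U ω)) |
        MeasurableSpace.comap (fun ω => e (Z' ω, V ω)) inferInstance]) ω‖ ^ 2 ∂μ')
      = ∫ ω, ‖Z'' ω - gt ω‖ ^ 2 ∂μ' := by
    refine integral_congr_ae ?_
    filter_upwards [condexp_eq_cellMean hJ hZ''2] with ω hω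
    rw [show (μ'[(fun ω => d (e (Z' ω, V ω), U ω)) |
        MeasurableSpace.comap (fun ω => e (Z' ω, V ω)) inferInstance]) ω
      = (μ'[Z'' | MeasurableSpace.comap J inferInstance]) ω from rfl, hω]
  rw [hceq1, hceq2]
  have hnn : 0 ≤ ∫ ω, ‖gt ω - Zt ω‖ ^ 2 ∂μ' :=
    integral_nonneg fun ω => sq_nonneg _
  have : ∫ ω, ‖Z' ω - d (e (Z' ω, V ω), U ω)‖ ^ 2 ∂μ' = ∫ ω, ‖Z' ω - Z'' ω‖ ^ 2 ∂μ' := rfl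
  rw [this, expand1, hflip, expand2]
  linarith

end StmtAux

open MeasureTheory ProbabilityTheory Real Set Filter
open scoped RealInnerProductSpace

noncomputable section
namespace StmtAux

variable {k M : ℕ}

local notation "E" => EuclideanSpace ℝ (Fin k)

lemma indepFun_fst_snd' {α β : Type*} [MeasurableSpace α] [MeasurableSpace β]
    (μ : Measure α) (ν : Measure β) [IsProbabilityMeasure μ] [IsProbabilityMeasure ν] :
    IndepFun (Prod.fst : α × β → α) (Prod.snd : α × β → β) (μ.prod ν) := by
  rw [indepFun_iff_map_prod_eq_prod_map_map measurable_fst.aemeasurable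
    measurable_snd.aemeasurable, Measure.map_fst_prod, Measure.map_snd_prod,
    measure_univ, measure_univ, one_smul, one_smul,
    show (fun ω : α × β => (ω.1, ω.2)) = id from rfl, Measure.map_id]

/-- a measurable nearest-point quantizer -/
lemma argmin_encoder (hM : 0 < M) (m : Fin M → E) :
    ∃ e₀ : E → Fin M, Measurable e₀ ∧ ∀ z j, ‖z - m (e₀ z)‖ ≤ ‖z - m j‖ := by
  classical
  set P : Fin M → Set E := fun j => {z | ∀ i, ‖z - m j‖ ≤ ‖z - m i‖} with hP
  have hPmeas : ∀ j, MeasurableSet (P j) := by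
    intro j
    have : P j = ⋂ i, {z | ‖z - m j‖ ≤ ‖z - m i‖} := by ext z; simp [hP]
    rw [this]
    refine MeasurableSet.iInter fun i => measurableSet_le ?_ ?_
    · exact ((continuous_id.sub continuous_const).norm).measurable
    · exact ((continuous_id.sub continuous_const).norm).measurable
  set s : E → Finset (Fin M) := fun z => Finset.univ.filter (fun j => z ∈ P j) with hs
  have hsne : ∀ z, (s z).Nonempty := by
    intro z
    obtain ⟨j, _, hj⟩ := Finset.exists_min_image Finset.univ (fun j => ‖z - m j‖)
      ⟨⟨0, hM⟩, Finset.mem_univ _⟩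
    exact ⟨j, Finset.mem_filter.2 ⟨Finset.mem_univ _, fun i => hj i (Finset.mem_univ _)⟩⟩
  set e₀ : E → Fin M := fun z => (s z).min' (hsne z) with he₀def
  have hmem : ∀ z, z ∈ P (e₀ z) := fun z =>
    (Finset.mem_filter.1 ((s z).min'_mem (hsne z))).2
  have hpre : ∀ j, e₀ ⁻¹' {j} = P j ∩ ⋂ i ∈ {i : Fin M | i < j}, (P i)ᶜ := by
    intro j
    ext z
    simp only [Set.mem_preimage, Set.mem_singleton_iff, Set.mem_inter_iff, Set.mem_iInter,
      Set.mem_compl_iff, Set.mem_setOf_eq]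
    constructor
    · intro hz
      refine ⟨hz ▸ hmem z, fun i hi hPi => ?_⟩
      have hmem' : i ∈ s z := Finset.mem_filter.2 ⟨Finset.mem_univ _, hPi⟩
      have h2 : e₀ z ≤ i := Finset.min'_le (s z) i hmem'
      rw [hz] at h2
      exact absurd hi (not_lt.2 h2)
    · rintro ⟨hPj, hlt⟩
      have hjmem : j ∈ s z := Finset.mem_filter.2 ⟨Finset.mem_univ _, hPj⟩
      have h1 : e₀ z ≤ j := Finset.min'_le (s z) j hjmem
      rcases lt_or_eq_of_le h1 with h | h
      · exact absurd (hmem z) (hlt _ h)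
      · exact h
  refine ⟨e₀, ?_, fun z j => (hmem z) j⟩
  refine measurable_to_countable' fun j => ?_
  rw [hpre j]
  exact (hPmeas j).inter (MeasurableSet.biInter (Set.to_countable _)
    (fun i _ => (hPmeas i).compl))

/-- expectation of the squared distance of two independent samples is twice the variance -/
lemma double_int (ν : Measure E) [IsProbabilityMeasure ν] (hν : MemLp id 2 ν) :
    ∫ z, ∫ w, ‖z - w‖ ^ 2 ∂ν ∂ν = 2 * ∫ w, ‖w - (∫ w', w' ∂ν)‖ ^ 2 ∂ν := by
  set c : E := ∫ w', w' ∂ν with hc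
  have hid : Integrable (fun w : E => w) ν := hν.integrable one_le_two
  have hsub2 : MemLp (fun w : E => c - w) 2 ν := (memLp_const c).sub hν
  have h3 : Integrable (fun w : E => ‖c - w‖ ^ 2) ν :=
    (memLp_two_iff_integrable_sq_norm hsub2.1).1 hsub2
  have hcenter : ∫ w, (c - w) ∂ν = 0 := by
    rw [integral_sub (integrable_const c) hid, integral_const, measureReal_def, measure_univ]
    simp [hc]
  have hpt : ∀ z : E, ∫ w, ‖z - w‖ ^ 2 ∂ν = ‖z - c‖ ^ 2 + ∫ w, ‖c - w‖ ^ 2 ∂ν := by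
    intro z
    have hexp : ∀ w : E, ‖z - w‖ ^ 2 = ‖z - c‖ ^ 2 + ‖c - w‖ ^ 2 + 2 * ⟪z - c, c - w⟫ := by
      intro w
      have : z - w = (z - c) + (c - w) := by abel
      rw [this, @norm_add_sq_real]; ring
    rw [show (∫ w, ‖z - w‖ ^ 2 ∂ν)
        = ∫ w, (‖z - c‖ ^ 2 + ‖c - w‖ ^ 2 + 2 * ⟪z - c, c - w⟫) ∂ν
      from integral_congr_ae (Eventually.of_forall fun w => hexp w)]
    have hinner_int : Integrable (fun w : E => ⟪z - c, c - w⟫) ν :=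
      inner_integrable (memLp_const (z - c)) hsub2
    have hA : Integrable (fun w : E => ‖z - c‖ ^ 2 + ‖c - w‖ ^ 2) ν := (integrable_const _).add h3
    have hB : Integrable (fun w : E => 2 * ⟪z - c, c - w⟫) ν := hinner_int.const_mul 2
    rw [show (∫ w, (‖z - c‖ ^ 2 + ‖c - w‖ ^ 2 + 2 * ⟪z - c, c - w⟫) ∂ν)
        = ∫ w, ((fun w => ‖z - c‖ ^ 2 + ‖c - w‖ ^ 2) w + (fun w => 2 * ⟪z - c, c - w⟫) w) ∂ν
        from rfl,
      integral_add hA hB, integral_add (integrable_const _) h3, integral_const_mul,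
      integral_inner (f := fun w : E => c - w) ((integrable_const c).sub hid) (z - c),
      hcenter, inner_zero_right, integral_const, measureReal_def, measure_univ]
    simp
  rw [show (∫ z, ∫ w, ‖z - w‖ ^ 2 ∂ν ∂ν)
      = ∫ z, (‖z - c‖ ^ 2 + ∫ w, ‖c - w‖ ^ 2 ∂ν) ∂ν
    from integral_congr_ae (Eventually.of_forall fun z => hpt z)]
  have h4 : Integrable (fun z : E => ‖z - c‖ ^ 2) ν :=
    (memLp_two_iff_integrable_sq_norm (hν.1.sub aestronglyMeasurable_const)).1
      (hν.sub (memLp_const c))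
  rw [integral_add h4 (integrable_const _), integral_const, measureReal_def, measure_univ]
  have : ∫ w, ‖c - w‖ ^ 2 ∂ν = ∫ w, ‖w - c‖ ^ 2 ∂ν := by
    congr 1; funext w; rw [norm_sub_rev]
  rw [this]
  simp
  ring
/-- the mean minimizes the quadratic distortion -/
lemma mean_opt (ρ : Measure E) [IsFiniteMeasure ρ] (hρ : MemLp id 2 ρ) (c y : E)
    (hcenter : ∫ z, (z - c) ∂ρ = 0) :
    ∫ z, ‖z - c‖ ^ 2 ∂ρ ≤ ∫ z, ‖z - y‖ ^ 2 ∂ρ := by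
  have hid : Integrable (fun z : E => z) ρ := hρ.integrable one_le_two
  have h1 : Integrable (fun z : E => ‖z - c‖ ^ 2) ρ :=
    (memLp_two_iff_integrable_sq_norm (hρ.1.sub aestronglyMeasurable_const)).1
      (hρ.sub (memLp_const c))
  have hexp : ∀ z : E, ‖z - y‖ ^ 2 = ‖z - c‖ ^ 2 + ‖c - y‖ ^ 2 + 2 * ⟪z - c, c - y⟫ := by
    intro z
    have : z - y = (z - c) + (c - y) := by abel
    rw [this, @norm_add_sq_real]; ring
  have hinner_int : Integrable (fun z : E => ⟪z - c, c - y⟫) ρ :=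
    inner_integrable (hρ.sub (memLp_const c)) (memLp_const (c - y))
  have hinner : ∫ z, ⟪z - c, c - y⟫ ∂ρ = 0 := by
    have : ∀ z : E, ⟪z - c, c - y⟫ = ⟪c - y, z - c⟫ := fun z => real_inner_comm _ _
    simp_rw [this]
    rw [integral_inner (f := fun z : E => z - c) (hid.sub (integrable_const c)) (c - y),
      hcenter, inner_zero_right]
  calc ∫ z, ‖z - c‖ ^ 2 ∂ρ
      ≤ (∫ z, ‖z - c‖ ^ 2 ∂ρ) + (ρ Set.univ).toReal * ‖c - y‖ ^ 2 := by
        have : 0 ≤ (ρ Set.univ).toReal * ‖c - y‖ ^ 2 :=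
          mul_nonneg ENNReal.toReal_nonneg (sq_nonneg _)
        linarith
    _ = ∫ z, ‖z - y‖ ^ 2 ∂ρ := by
        rw [show (∫ z, ‖z - y‖ ^ 2 ∂ρ)
            = ∫ z, (‖z - c‖ ^ 2 + ‖c - y‖ ^ 2 + 2 * ⟪z - c, c - y⟫) ∂ρ
          from integral_congr_ae (Eventually.of_forall fun z => hexp z)]
        have hA : Integrable (fun z : E => ‖z - c‖ ^ 2 + ‖c - y‖ ^ 2) ρ :=
          h1.add (integrable_const _)
        have hB : Integrable (fun z : E => 2 * ⟪z - c, c - y⟫) ρ := hinner_int.const_mul 2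
        rw [integral_add hA hB, integral_add h1 (integrable_const _), integral_const_mul,
          hinner, integral_const, smul_eq_mul, measureReal_def]
        ring

end StmtAux

open MeasureTheory ProbabilityTheory Real Set Filter
open scoped RealInnerProductSpace

noncomputable section
namespace StmtAux

variable {k M : ℕ}

local notation "E" => EuclideanSpace ℝ (Fin k)

lemma upper_bound (hM : 0 < M)
    {Ω : Type} [MeasurableSpace Ω] (μ : Measure Ω) [IsProbabilityMeasure μ]
    {Z : Ω → E} (hZmeas : Measurable Z) (hZ2 : MemLp Z 2 μ)
    {Ω₁ : Type} [MeasurableSpace Ω₁] (μ₁ : Measure Ω₁) [IsProbabilityMeasure μ₁]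
    {Z₁ : Ω₁ → E} {J₁ : Ω₁ → Fin M} (hZ₁ : Measurable Z₁) (hJ₁ : Measurable J₁)
    (hmap₁ : μ₁.map Z₁ = μ.map Z) :
    ∃ (Ω' : Type) (_ : MeasurableSpace Ω') (μ' : Measure Ω'),
      IsProbabilityMeasure μ' ∧
      ∃ (Z' : Ω' → E) (V U : Ω' → ℝ) (e : (EuclideanSpace ℝ (Fin k)) × ℝ → Fin M)
        (d : Fin M × ℝ → EuclideanSpace ℝ (Fin k)),
        Measurable Z' ∧ Measurable V ∧ Measurable U ∧ Measurable e ∧ Measurable d ∧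
        μ'.map Z' = μ.map Z ∧ IndepFun Z' V μ' ∧
        IndepFun (fun ω => (Z' ω, e (Z' ω, V ω))) U μ' ∧
        μ'.map (fun ω => d (e (Z' ω, V ω), U ω)) = μ.map Z ∧
        (∫ ω, ‖Z' ω - d (e (Z' ω, V ω), U ω)‖ ^ 2 ∂μ') ≤
          2 * ∫ ω, ‖Z₁ ω - (μ₁[Z₁ | MeasurableSpace.comap J₁ inferInstance]) ω‖ ^ 2 ∂μ₁ := by
  classical
  set p : Measure E := μ.map Z with hpdef
  haveI : IsProbabilityMeasure p  := Measure.isProbabilityMeasure_map hZmeas.aemeasurable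
  have hZ₁2 : MemLp Z₁ 2 μ₁ := memLp_transfer hZmeas hZ₁ hmap₁ hZ2
  have hp2 : MemLp (id : E → E) 2 p :=
    (memLp_map_measure_iff aestronglyMeasurable_id hZmeas.aemeasurable).2 hZ2
  set m : Fin M → E := cellMean μ₁ J₁ Z₁ with hm
  obtain ⟨e₀, he₀, hopt⟩ := argmin_encoder hM m
  set A : Fin M → Set E := fun j => e₀ ⁻¹' {j} with hA
  have hAmeas : ∀ j, MeasurableSet (A j) := fun j => he₀ (measurableSet_singleton j)
  set ν : Fin M → Measure E :=
    fun j => if p (A j) = 0 then p else (p (A j))⁻¹ • p.restrict (A j) with hν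
  have hνprob : ∀ j, IsProbabilityMeasure (ν j) := by
    intro j
    by_cases h : p (A j) = 0
    · simp only [hν, if_pos h]; infer_instance
    · simp only [hν, if_neg h]
      constructor
      rw [Measure.smul_apply, Measure.restrict_apply_univ, smul_eq_mul,
        ENNReal.inv_mul_cancel h (measure_ne_top _ _)]
  have hrestrict : ∀ j, p (A j) ≠ 0 → p.restrict (A j) = p (A j) • ν j := by
    intro j h
    simp only [hν, if_neg h, smul_smul, ENNReal.mul_inv_cancel h (measure_ne_top _ _), one_smul]
  have hν2 : ∀ j, MemLp (id : E → E) 2 (ν j) := by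
    intro j
    by_cases h : p (A j) = 0
    · simp only [hν, if_pos h]; exact hp2
    · simp only [hν, if_neg h]
      exact (hp2.restrict (A j)).smul_measure (ENNReal.inv_ne_top.2 h)
  have hsampler : ∀ j, ∃ f : ℝ → E, Measurable f ∧ unif.map f = ν j := by
    intro j
    haveI := hνprob j
    exact sampler (ν j)
  choose f hfm hfmap using hsampler
  -- the decoder-with-noise as a function on E × ℝ
  set g : E × ℝ → E := fun q => f (e₀ q.1) q.2 with hgdef
  have hgm : Measurable g := by
    have : g = (fun q : ℝ × Fin M => f q.2 q.1) ∘ (fun q : E × ℝ => (q.2, e₀ q.1)) := rfl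
    rw [this]
    exact (measurable_from_prod_countable_left fun j => hfm j).comp
      (measurable_snd.prodMk (he₀.comp measurable_fst))
  -- the key pushforward identity
  have hmain : (p.prod unif).map g = p := by
    ext S hS
    rw [Measure.map_apply hgm hS, Measure.prod_apply (hgm hS)]
    have hpt : ∀ z : E, unif (Prod.mk z ⁻¹' (g ⁻¹' S)) = ν (e₀ z) S := by
      intro z
      rw [show Prod.mk z ⁻¹' (g ⁻¹' S) = (f (e₀ z)) ⁻¹' S from rfl,
        ← Measure.map_apply (hfm _) hS, hfmap]
    rw [lintegral_congr hpt]
    have hcover : (⋃ j ∈ (Finset.univ : Finset (Fin M)), A j) = Set.univ := by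
      ext z; simp [hA]
    have hdecomp : ∫⁻ z, ν (e₀ z) S ∂p = ∑ j : Fin M, ∫⁻ z in A j, ν (e₀ z) S ∂p := by
      rw [← setLIntegral_univ, ← hcover]
      exact lintegral_biUnion_finset (disj_cells e₀) (fun j _ => hAmeas j) _
    rw [hdecomp]
    have hcell : ∀ j : Fin M, (∫⁻ z in A j, ν (e₀ z) S ∂p) = ν j S * p (A j) := by
      intro j
      rw [setLIntegral_congr_fun (hAmeas j)
        (fun z hz => by rw [show e₀ z = j from hz]), setLIntegral_const]
    rw [Finset.sum_congr rfl (fun j _ => hcell j)]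
    have hterm : ∀ j : Fin M, ν j S * p (A j) = p (S ∩ A j) := by
      intro j
      by_cases h : p (A j) = 0
      · rw [h, mul_zero]
        exact (measure_mono_null Set.inter_subset_right h).symm
      · simp only [hν, if_neg h, Measure.smul_apply, Measure.restrict_apply hS, smul_eq_mul]
        rw [mul_comm (p (A j))⁻¹ _, mul_assoc, ENNReal.inv_mul_cancel h (measure_ne_top _ _),
          mul_one]
    rw [Finset.sum_congr rfl (fun j _ => hterm j)]
    have hS_eq : (⋃ j ∈ (Finset.univ : Finset (Fin M)), (S ∩ A j)) = S := by
      ext z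
      simp only [Set.mem_iUnion, Finset.mem_univ, true_and, Set.mem_inter_iff, exists_and_left,
        exists_prop]
      constructor
      · rintro ⟨hzS, _⟩; exact hzS
      · intro hz; exact ⟨hz, ⟨e₀ z, rfl⟩⟩
    have hdisj2 : ((Finset.univ : Finset (Fin M)) : Set (Fin M)).PairwiseDisjoint
        (fun j => S ∩ A j) := fun i hi j hj hij =>
      Disjoint.mono Set.inter_subset_right Set.inter_subset_right (disj_cells e₀ hi hj hij)
    rw [← measure_biUnion_finset hdisj2 (fun j _ => hS.inter (hAmeas j)), hS_eq]
  -- the ambient space and projections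
  set μc : Measure (EuclideanSpace ℝ (Fin k) × (ℝ × ℝ)) := p.prod (unif.prod unif) with hμc
  haveI : IsProbabilityMeasure μc := by rw [hμc]; infer_instance
  set T : EuclideanSpace ℝ (Fin k) × (ℝ × ℝ) → EuclideanSpace ℝ (Fin k) × ℝ :=
    fun ω => (ω.1, ω.2.2) with hT
  have hTm : Measurable T := measurable_fst.prodMk (measurable_snd.comp measurable_snd)
  have hmapT : μc.map T = p.prod unif := by
    rw [show T = Prod.map (id : EuclideanSpace ℝ (Fin k) → EuclideanSpace ℝ (Fin k))
        (Prod.snd : ℝ × ℝ → ℝ) from rfl, hμc,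
      ← Measure.map_prod_map _ _ measurable_id measurable_snd,
      Measure.map_id, Measure.map_snd_prod, measure_univ, one_smul]
  have hrecon : μc.map (fun ω => g (T ω)) = p := by
    rw [show (fun ω => g (T ω)) = g ∘ T from rfl, ← Measure.map_map hgm hTm, hmapT, hmain]
  -- the distortion computation
  set φ : EuclideanSpace ℝ (Fin k) × ℝ → ℝ := fun q => ‖q.1 - g q‖ ^ 2 with hφ
  have hfstL2 : MemLp (Prod.fst : EuclideanSpace ℝ (Fin k) × ℝ → E) 2 (p.prod unif) :=
    memLp_transfer hZmeas measurable_fst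
      (by rw [Measure.map_fst_prod, measure_univ, one_smul]) hZ2
  have hgL2 : MemLp g 2 (p.prod unif) := memLp_transfer hZmeas hgm (by rw [hmain]) hZ2
  have hφint : Integrable φ (p.prod unif) :=
    (memLp_two_iff_integrable_sq_norm
      (measurable_fst.aestronglyMeasurable.sub hgm.aestronglyMeasurable)).1
      (hfstL2.sub hgL2)
  have hdist1 : (∫ ω, ‖ω.1 - g (T ω)‖ ^ 2 ∂μc) = ∫ q, φ q ∂(p.prod unif) := by
    rw [← hmapT, integral_map hTm.aemeasurable]
    exact ((measurable_fst.sub hgm).norm.pow_const 2).aestronglyMeasurable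
  have hinner_pt : ∀ z : E, (∫ u, φ (z, u) ∂unif) = ∫ w, ‖z - w‖ ^ 2 ∂(ν (e₀ z)) := by
    intro z
    rw [← hfmap (e₀ z)]
    have ham : AEStronglyMeasurable (fun w : E => ‖z - w‖ ^ 2)
        (Measure.map (f (e₀ z)) unif) :=
      (((measurable_const.sub measurable_id).norm.pow_const 2)).aestronglyMeasurable
    rw [integral_map (hfm _).aemeasurable ham]
  have hHint : Integrable (fun z => ∫ u, φ (z, u) ∂unif) p := hφint.integral_prod_left
  have hint2 : Integrable (fun z : E => ‖z - m (e₀ z)‖ ^ 2) p :=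
    (memLp_two_iff_integrable_sq_norm
      (measurable_id.aestronglyMeasurable.sub
        ((measurable_fin_fun m).comp he₀).aestronglyMeasurable)).1
      (hp2.sub (memLp_comp_fin m he₀ 2))
  have hcell_bound : ∀ j : Fin M,
      (∫ z in A j, (∫ u, φ (z, u) ∂unif) ∂p) ≤ 2 * ∫ z in A j, ‖z - m j‖ ^ 2 ∂p := by
    intro j
    by_cases h0 : p (A j) = 0
    · rw [Measure.restrict_eq_zero.mpr h0]
      simp
    · have hresj := hrestrict j h0
      have e1 : (∫ z in A j, (∫ u, φ (z, u) ∂unif) ∂p)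
          = (p (A j)).toReal • ∫ z, (∫ w, ‖z - w‖ ^ 2 ∂(ν j)) ∂(ν j) := by
        rw [setIntegral_congr_fun (hAmeas j)
            (fun z hz => by rw [hinner_pt z, show e₀ z = j from hz]),
          show (∫ z in A j, (∫ w, ‖z - w‖ ^ 2 ∂(ν j)) ∂p)
            = ∫ z, (∫ w, ‖z - w‖ ^ 2 ∂(ν j)) ∂(p.restrict (A j)) from rfl,
          hresj, integral_smul_measure]
      have e2 : (∫ z in A j, ‖z - m j‖ ^ 2 ∂p)
          = (p (A j)).toReal • ∫ z, ‖z - m j‖ ^ 2 ∂(ν j) := by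
        rw [show (∫ z in A j, ‖z - m j‖ ^ 2 ∂p)
            = ∫ z, ‖z - m j‖ ^ 2 ∂(p.restrict (A j)) from rfl, hresj, integral_smul_measure]
      haveI := hνprob j
      have hmean : ∫ w, (w - ∫ w', w' ∂(ν j)) ∂(ν j) = 0 := by
        have hi : Integrable (fun w : E => w) (ν j) := (hν2 j).integrable one_le_two
        rw [integral_sub hi (integrable_const _), integral_const, measureReal_def, measure_univ]
        simp
      have hopt' : (∫ z, ‖z - (∫ w', w' ∂(ν j))‖ ^ 2 ∂(ν j)) ≤ ∫ z, ‖z - m j‖ ^ 2 ∂(ν j) :=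
        mean_opt (ν j) (hν2 j) _ (m j) hmean
      rw [e1, e2, double_int (ν j) (hν2 j), smul_eq_mul, smul_eq_mul]
      calc (p (A j)).toReal * (2 * ∫ w, ‖w - ∫ w', w' ∂(ν j)‖ ^ 2 ∂(ν j))
          ≤ (p (A j)).toReal * (2 * ∫ z, ‖z - m j‖ ^ 2 ∂(ν j)) := by
            apply mul_le_mul_of_nonneg_left _ ENNReal.toReal_nonneg
            linarith
        _ = 2 * ((p (A j)).toReal * ∫ z, ‖z - m j‖ ^ 2 ∂(ν j)) := by ring
  have hsum2 : ∑ j : Fin M, (2 : ℝ) * ∫ z in A j, ‖z - m j‖ ^ 2 ∂p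
      = 2 * ∫ z, ‖z - m (e₀ z)‖ ^ 2 ∂p := by
    rw [← Finset.mul_sum]
    congr 1
    rw [integral_partition he₀ hint2]
    exact (Finset.sum_congr rfl fun j _ => (setIntegral_congr_fun (hAmeas j)
      (fun z hz => by rw [show e₀ z = j from hz])).symm).symm
  have hstep : ∫ z, ‖z - m (e₀ z)‖ ^ 2 ∂p = ∫ ω, ‖Z₁ ω - m (e₀ (Z₁ ω))‖ ^ 2 ∂μ₁ := by
    rw [show p = μ₁.map Z₁ from hmap₁.symm, integral_map hZ₁.aemeasurable]
    exact ((measurable_id.sub ((measurable_fin_fun m).comp he₀)).norm.pow_const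
      2).aestronglyMeasurable
  have hint3 : Integrable (fun ω => ‖Z₁ ω - m (e₀ (Z₁ ω))‖ ^ 2) μ₁ :=
    (memLp_two_iff_integrable_sq_norm
      (hZ₁.aestronglyMeasurable.sub
        (((measurable_fin_fun m).comp (he₀.comp hZ₁)).aestronglyMeasurable))).1
      (hZ₁2.sub (memLp_comp_fin m (he₀.comp hZ₁) 2))
  have hint4 : Integrable (fun ω => ‖Z₁ ω - m (J₁ ω)‖ ^ 2) μ₁ :=
    (memLp_two_iff_integrable_sq_norm
      (hZ₁.aestronglyMeasurable.sub
        (((measurable_fin_fun m).comp hJ₁).aestronglyMeasurable))).1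
      (hZ₁2.sub (memLp_comp_fin m hJ₁ 2))
  have hmono : (∫ ω, ‖Z₁ ω - m (e₀ (Z₁ ω))‖ ^ 2 ∂μ₁) ≤ ∫ ω, ‖Z₁ ω - m (J₁ ω)‖ ^ 2 ∂μ₁ :=
    integral_mono hint3 hint4 (fun ω =>
      pow_le_pow_left₀ (norm_nonneg _) (hopt (Z₁ ω) (J₁ ω)) 2)
  have hr : (∫ ω, ‖Z₁ ω - m (J₁ ω)‖ ^ 2 ∂μ₁)
      = ∫ ω, ‖Z₁ ω - (μ₁[Z₁ | MeasurableSpace.comap J₁ inferInstance]) ω‖ ^ 2 ∂μ₁ := by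
    refine integral_congr_ae ?_
    filter_upwards [condexp_eq_cellMean hJ₁ hZ₁2] with ω hω
    rw [hω]
  -- assemble
  refine ⟨EuclideanSpace ℝ (Fin k) × (ℝ × ℝ), inferInstance, μc, inferInstance,
    Prod.fst, (fun ω => ω.2.1), (fun ω => ω.2.2), (fun q => e₀ q.1), (fun q => f q.1 q.2),
    measurable_fst, measurable_fst.comp measurable_snd, measurable_snd.comp measurable_snd,
    he₀.comp measurable_fst, ?_, ?_, ?_, ?_, ?_, ?_⟩
  · -- measurable d
    have hd0 : Measurable (fun q : ℝ × Fin M => f q.2 q.1) :=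
      measurable_from_prod_countable_left (fun j => hfm j)
    exact hd0.comp measurable_swap
  · -- map Z'
    rw [hμc, Measure.map_fst_prod, measure_univ, one_smul]
  · -- indep Z' V
    exact (indepFun_fst_snd' p (unif.prod unif)).comp measurable_id measurable_fst
  · -- indep (Z', J) U
    exact (indepFun_fst_snd' p (unif.prod unif)).comp
      (measurable_id.prodMk he₀) measurable_snd
  · -- perception
    exact hrecon
  · -- distortion bound
    calc ∫ ω, ‖ω.1 - g (T ω)‖ ^ 2 ∂μc = ∫ q, φ q ∂(p.prod unif) := hdist1
      _ = ∫ z, ∫ u, φ (z, u) ∂unif ∂p := integral_prod φ hφint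
      _ = ∑ j : Fin M, ∫ z in A j, (∫ u, φ (z, u) ∂unif) ∂p := integral_partition he₀ hHint
      _ ≤ ∑ j : Fin M, (2 : ℝ) * ∫ z in A j, ‖z - m j‖ ^ 2 ∂p :=
            Finset.sum_le_sum fun j _ => hcell_bound j
      _ = 2 * ∫ z, ‖z - m (e₀ z)‖ ^ 2 ∂p := hsum2
      _ = 2 * ∫ ω, ‖Z₁ ω - m (e₀ (Z₁ ω))‖ ^ 2 ∂μ₁ := by rw [hstep]
      _ ≤ 2 * ∫ ω, ‖Z₁ ω - m (J₁ ω)‖ ^ 2 ∂μ₁ := by linarith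
      _ = 2 * ∫ ω, ‖Z₁ ω - (μ₁[Z₁ | MeasurableSpace.comap J₁ inferInstance]) ω‖ ^ 2 ∂μ₁ := by
            rw [hr]

end StmtAux




open MeasureTheory ProbabilityTheory Real

/-- Over all (possibly stochastic) encoder–decoder pairs `φ : ℝᵏ → {0,…,M−1}`,
`ψ : {0,…,M−1} → ℝᵏ` — modeled on an arbitrary probability space carrying a copy `Z'` of the
source, auxiliary randomization variables `V` (for the encoder) and `U` (for the decoder,
independent of `(Z', J)`), with `J = e(Z', V)` and reconstruction `d(J, U)` — the minimum of
`E[‖Z − ψ(φ(Z))‖²]` subject to the perfect perception constraint (the reconstruction has the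
same distribution as the source) equals twice the unconstrained minimum of
`E[‖Z − E[Z|φ(Z)]‖²]`. -/
theorem stmt1 {k M : ℕ} (hM : 0 < M)
    {Ω : Type} [MeasurableSpace Ω] (μ : Measure Ω) [IsProbabilityMeasure μ]
    (Z : Ω → EuclideanSpace ℝ (Fin k)) (hZmeas : Measurable Z) (hZ2 : MemLp Z 2 μ) :
    sInf {c : ℝ | ∃ (Ω' : Type) (_ : MeasurableSpace Ω') (μ' : Measure Ω'),
        IsProbabilityMeasure μ' ∧
        ∃ (Z' : Ω' → EuclideanSpace ℝ (Fin k)) (V U : Ω' → ℝ)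
          (e : EuclideanSpace ℝ (Fin k) × ℝ → Fin M)
          (d : Fin M × ℝ → EuclideanSpace ℝ (Fin k)),
          Measurable Z' ∧ Measurable V ∧ Measurable U ∧ Measurable e ∧ Measurable d ∧
          μ'.map Z' = μ.map Z ∧
          IndepFun Z' V μ' ∧
          IndepFun (fun ω => (Z' ω, e (Z' ω, V ω))) U μ' ∧
          μ'.map (fun ω => d (e (Z' ω, V ω), U ω)) = μ.map Z ∧
          c = ∫ ω, ‖Z' ω - d (e (Z' ω, V ω), U ω)‖ ^ 2 ∂μ'} =
    2 * sInf {c : ℝ | ∃ (Ω' : Type) (_ : MeasurableSpace Ω') (μ' : Measure Ω'),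
        IsProbabilityMeasure μ' ∧
        ∃ (Z' : Ω' → EuclideanSpace ℝ (Fin k)) (J : Ω' → Fin M),
          Measurable Z' ∧ Measurable J ∧
          μ'.map Z' = μ.map Z ∧
          c = ∫ ω, ‖Z' ω - (μ'[Z' | MeasurableSpace.comap J inferInstance]) ω‖ ^ 2 ∂μ'} := by
  classical
  set LHS : Set ℝ := {c : ℝ | ∃ (Ω' : Type) (_ : MeasurableSpace Ω') (μ' : Measure Ω'),
        IsProbabilityMeasure μ' ∧
        ∃ (Z' : Ω' → EuclideanSpace ℝ (Fin k)) (V U : Ω' → ℝ)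
          (e : EuclideanSpace ℝ (Fin k) × ℝ → Fin M)
          (d : Fin M × ℝ → EuclideanSpace ℝ (Fin k)),
          Measurable Z' ∧ Measurable V ∧ Measurable U ∧ Measurable e ∧ Measurable d ∧
          μ'.map Z' = μ.map Z ∧
          IndepFun Z' V μ' ∧
          IndepFun (fun ω => (Z' ω, e (Z' ω, V ω))) U μ' ∧
          μ'.map (fun ω => d (e (Z' ω, V ω), U ω)) = μ.map Z ∧
          c = ∫ ω, ‖Z' ω - d (e (Z' ω, V ω), U ω)‖ ^ 2 ∂μ'} with hLHS
  set RHS : Set ℝ := {c : ℝ | ∃ (Ω' : Type) (_ : MeasurableSpace Ω') (μ' : Measure Ω'),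
        IsProbabilityMeasure μ' ∧
        ∃ (Z' : Ω' → EuclideanSpace ℝ (Fin k)) (J : Ω' → Fin M),
          Measurable Z' ∧ Measurable J ∧
          μ'.map Z' = μ.map Z ∧
          c = ∫ ω, ‖Z' ω - (μ'[Z' | MeasurableSpace.comap J inferInstance]) ω‖ ^ 2 ∂μ'} with hRHS
  -- RHS is nonempty
  have hRne : RHS.Nonempty := by
    refine ⟨_, Ω, inferInstance, μ, inferInstance, Z, fun _ => (⟨0, hM⟩ : Fin M),
      hZmeas, measurable_const, rfl, rfl⟩
  -- both sets are bounded below by 0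
  have hRbdd : BddBelow RHS := by
    refine ⟨0, fun c hc => ?_⟩
    obtain ⟨Ω', mΩ', μ', hμ', Z', J, hZ', hJ, hmap, hc⟩ := hc
    rw [hc]
    exact integral_nonneg fun ω => sq_nonneg _
  have hLbdd : BddBelow LHS := by
    refine ⟨0, fun c hc => ?_⟩
    obtain ⟨Ω', mΩ', μ', hμ', Z', V, U, e, d, h1, h2, h3, h4, h5, h6, h7, h8, h9, hc⟩ := hc
    rw [hc]
    exact integral_nonneg fun ω => sq_nonneg _
  -- upper bound: for each r ∈ RHS there is c ∈ LHS with c ≤ 2r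
  have hupper : ∀ r ∈ RHS, ∃ c ∈ LHS, c ≤ 2 * r := by
    intro r hr
    obtain ⟨Ω₁, mΩ₁, μ₁, hμ₁, Z₁, J₁, hZ₁, hJ₁, hmap₁, hrval⟩ := hr
    haveI := hμ₁
    obtain ⟨Ω', mΩ', μ', hμ', Z', V, U, e, d, h1, h2, h3, h4, h5, h6, h7, h8, h9, hbound⟩ :=
      StmtAux.upper_bound hM μ hZmeas hZ2 μ₁ hZ₁ hJ₁ hmap₁
    refine ⟨∫ ω, ‖Z' ω - d (e (Z' ω, V ω), U ω)‖ ^ 2 ∂μ',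
      ⟨Ω', mΩ', μ', hμ', Z', V, U, e, d, h1, h2, h3, h4, h5, h6, h7, h8, h9, rfl⟩, ?_⟩
    rw [hrval]
    exact hbound
  have hLne : LHS.Nonempty := by
    obtain ⟨r, hr⟩ := hRne
    obtain ⟨c, hc, _⟩ := hupper r hr
    exact ⟨c, hc⟩
  -- lower bound : every c ∈ LHS is at least 2 * sInf RHS
  have hlower : ∀ c ∈ LHS, 2 * sInf RHS ≤ c := by
    intro c hc
    obtain ⟨Ω', mΩ', μ', hμ', Z', V, U, e, d, h1, h2, h3, h4, h5, h6, h7, h8, h9, hc⟩ := hc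
    haveI := hμ'
    have ha : (∫ ω, ‖Z' ω - (μ'[Z' | MeasurableSpace.comap
        (fun ω => e (Z' ω, V ω)) inferInstance]) ω‖ ^ 2 ∂μ') ∈ RHS :=
      ⟨Ω', mΩ', μ', hμ', Z', fun ω => e (Z' ω, V ω), h1,
        h4.comp (h1.prodMk h2), h6, rfl⟩
    have hb : (∫ ω, ‖d (e (Z' ω, V ω), U ω) -
        (μ'[(fun ω => d (e (Z' ω, V ω), U ω)) | MeasurableSpace.comap
          (fun ω => e (Z' ω, V ω)) inferInstance]) ω‖ ^ 2 ∂μ') ∈ RHS :=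
      ⟨Ω', mΩ', μ', hμ', fun ω => d (e (Z' ω, V ω), U ω), fun ω => e (Z' ω, V ω),
        h5.comp ((h4.comp (h1.prodMk h2)).prodMk h3),
        h4.comp (h1.prodMk h2), h9, rfl⟩
    have hkey := StmtAux.lower_bound μ hZmeas hZ2 h1 h2 h3 h4 h5 h6 h8 h9
    have h1' := csInf_le hRbdd ha
    have h2' := csInf_le hRbdd hb
    rw [hc]
    linarith
  refine le_antisymm ?_ (le_csInf hLne hlower)
  have hhalf : sInf LHS / 2 ≤ sInf RHS := by
    refine le_csInf hRne fun r hr => ?_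
    obtain ⟨c, hcL, hcle⟩ := hupper r hr
    have := csInf_le hLbdd hcL
    linarith
  linarith
end
end
end
end
end
end
end

section
/- Let Z be a square-integrable random vector in R^k with representation W, MMSE estimate Z̃ = E[Z|W], and let Z' be jointly distributed with (Z,W) such that Z ↔ W ↔ Z' is a Markov chain, p_{Z'} = p_Z, and E[‖Z' − Z̃‖²] = W₂²(p_Z, p_{Z̃}). For P ∈ [0, W₂²(p_Z, p_{Z̃})), define Ẑ = (1 − √P/W₂(p_Z,p_{Z̃})) Z' + (√P/W₂(p_Z,p_{Z̃})) Z̃. Then W₂²(p_Z, p_{Ẑ}) ≤ P and E[‖Z − Ẑ‖²] = E[‖Z − Z̃‖²] + (W₂(p_Z, p_{Z̃}) − √P)². -/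
open MeasureTheory ProbabilityTheory Real

lemma integrable_inner_of_memLp {α E : Type*} [MeasurableSpace α] {μ : Measure α}
    [NormedAddCommGroup E] [InnerProductSpace ℝ E]
    {f g : α → E} (hf : MemLp f 2 μ) (hg : MemLp g 2 μ) :
    Integrable (fun x => (inner ℝ (f x) (g x) : ℝ)) μ := by
  have h := L2.integrable_inner (𝕜 := ℝ) (hf.toLp f) (hg.toLp g)
  refine h.congr ?_
  filter_upwards [hf.coeFn_toLp, hg.coeFn_toLp] with x h1 h2
  rw [h1, h2]

lemma integrable_mul_of_memLp2 {α : Type*} [MeasurableSpace α] {μ : Measure α} {f g : α → ℝ}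
    (hf : MemLp f 2 μ) (hg : MemLp g 2 μ) : Integrable (fun x => f x * g x) μ := by
  have h := integrable_inner_of_memLp (E := ℝ) hf hg
  simpa [RCLike.inner_apply, conj_trivial, mul_comm] using h

lemma condexp_clm {α F G : Type*} {m m0 : MeasurableSpace α} (hm : m ≤ m0) {μ : Measure α}
    [SigmaFinite (μ.trim hm)]
    [NormedAddCommGroup F] [NormedSpace ℝ F] [CompleteSpace F]
    [NormedAddCommGroup G] [NormedSpace ℝ G] [CompleteSpace G]
    (L : F →L[ℝ] G) {f : α → F} (hf : Integrable f μ) :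
    (fun ω => L ((μ[f|m]) ω)) =ᵐ[μ] μ[fun ω => L (f ω)|m] := by
  refine ae_eq_condExp_of_forall_setIntegral_eq hm (L.integrable_comp hf)
    (fun s _ _ => (L.integrable_comp integrable_condExp).integrableOn)
    (fun s hs _ => ?_)
    ((L.continuous.comp_stronglyMeasurable stronglyMeasurable_condExp).aestronglyMeasurable)
  rw [L.integral_comp_comm integrable_condExp.integrableOn,
    L.integral_comp_comm hf.integrableOn, setIntegral_condExp hm hf hs]

lemma integral_eucl_apply {k : ℕ} {α : Type*} [MeasurableSpace α] {μ : Measure α}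
    {F : α → EuclideanSpace ℝ (Fin k)} (hF : Integrable F μ) (i : Fin k) :
    (∫ x, F x ∂μ) i = ∫ x, F x i ∂μ := by
  have := (EuclideanSpace.proj (𝕜 := ℝ) i).integral_comp_comm hF
  simpa using this.symm

lemma memLp_eucl_apply {k : ℕ} {α : Type*} [MeasurableSpace α] {μ : Measure α}
    {F : α → EuclideanSpace ℝ (Fin k)} (hF : MemLp F 2 μ) (i : Fin k) :
    MemLp (fun x => F x i) 2 μ := by
  have := (EuclideanSpace.proj (𝕜 := ℝ) i).comp_memLp' hF
  exact this


/-- The interpolation scheme is optimal: let `Z̃ = E[Z|W]` be the MMSE estimate, and let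
`Z' = d(W, U)` (so that `Z ↔ W ↔ Z'` is a Markov chain, `U` being randomization independent
of `(Z, W)`) satisfy `p_{Z'} = p_Z` and `E[‖Z' − Z̃‖²] = W₂²(p_Z, p_Z̃)`.
For `P ∈ [0, W₂²(p_Z, p_Z̃))`, the reconstruction
`Ẑ = (1 − √P/W₂(p_Z,p_Z̃)) Z' + (√P/W₂(p_Z,p_Z̃)) Z̃` satisfies `W₂²(p_Z, p_Ẑ) ≤ P` and
`E[‖Z − Ẑ‖²] = E[‖Z − Z̃‖²] + (W₂(p_Z, p_Z̃) − √P)²`. -/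
theorem stmt3 {k : ℕ} {Ω 𝓦 : Type*} [MeasurableSpace Ω] [MeasurableSpace 𝓦]
    (μ : Measure Ω) [IsProbabilityMeasure μ]
    (Z : Ω → EuclideanSpace ℝ (Fin k)) (W : Ω → 𝓦) (U : Ω → ℝ)
    (d : 𝓦 × ℝ → EuclideanSpace ℝ (Fin k))
    (hZmeas : Measurable Z) (hWmeas : Measurable W) (hUmeas : Measurable U)
    (hdmeas : Measurable d) (hZ2 : MemLp Z 2 μ)
    (hindep : IndepFun (fun ω => (Z ω, W ω)) U μ)
    (Zt : Ω → EuclideanSpace ℝ (Fin k))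
    (hZt : Zt = μ[Z | MeasurableSpace.comap W inferInstance])
    (Z' : Ω → EuclideanSpace ℝ (Fin k)) (hZ' : Z' = fun ω => d (W ω, U ω))
    (hZ'law : μ.map Z' = μ.map Z)
    (hZ'opt : ∫ ω, ‖Z' ω - Zt ω‖ ^ 2 ∂μ = W2sq (μ.map Z) (μ.map Zt))
    (s : ℝ) (hs : s = Real.sqrt (W2sq (μ.map Z) (μ.map Zt)))
    (P : ℝ) (hP0 : 0 ≤ P) (hPlt : P < W2sq (μ.map Z) (μ.map Zt))
    (Zh : Ω → EuclideanSpace ℝ (Fin k))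
    (hZh : Zh = fun ω => (1 - Real.sqrt P / s) • Z' ω + (Real.sqrt P / s) • Zt ω) :
    W2sq (μ.map Z) (μ.map Zh) ≤ P ∧
    ∫ ω, ‖Z ω - Zh ω‖ ^ 2 ∂μ =
      ∫ ω, ‖Z ω - Zt ω‖ ^ 2 ∂μ + (s - Real.sqrt P) ^ 2 := by
  -- basic setup
  set t : ℝ := Real.sqrt P / s with ht
  have hmW : MeasurableSpace.comap W inferInstance ≤ (inferInstance : MeasurableSpace Ω) :=
    hWmeas.comap_le
  haveI : IsFiniteMeasure (μ.trim hmW) := isFiniteMeasure_trim hmW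
  have hZtsm : StronglyMeasurable[MeasurableSpace.comap W inferInstance] Zt :=
    hZt ▸ stronglyMeasurable_condExp
  have hZtmeas : Measurable Zt := (hZtsm.mono hmW).measurable
  have hZ'meas : Measurable Z' := hZ' ▸ hdmeas.comp (hWmeas.prodMk hUmeas)
  have hZhmeas : Measurable Zh := by
    rw [hZh]; exact (hZ'meas.const_smul (1 - t)).add (hZtmeas.const_smul t)
  have hZtint : Integrable Zt μ := hZt ▸ integrable_condExp
  have hZint : Integrable Z μ := hZ2.integrable one_le_two
  -- W2sq positivity
  have hW2pos : 0 < W2sq (μ.map Z) (μ.map Zt) := lt_of_le_of_lt hP0 hPlt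
  have hspos : 0 < s := hs ▸ Real.sqrt_pos.mpr hW2pos
  have hs2 : s ^ 2 = W2sq (μ.map Z) (μ.map Zt) := by rw [hs, Real.sq_sqrt hW2pos.le]
  -- integrability of ‖Z' - Zt‖²
  have hint_sq : Integrable (fun ω => ‖Z' ω - Zt ω‖ ^ 2) μ := by
    by_contra h
    rw [integral_undef h] at hZ'opt
    exact hW2pos.ne hZ'opt
  have hD2 : MemLp (fun ω => Z' ω - Zt ω) 2 μ :=
    (memLp_two_iff_integrable_sq_norm ((hZ'meas.sub hZtmeas).aestronglyMeasurable)).mpr hint_sq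
  have hZ'2 : MemLp Z' 2 μ := by
    have h1 : MemLp id 2 (μ.map Z) := by
      rw [memLp_map_measure_iff aestronglyMeasurable_id hZmeas.aemeasurable]
      simpa [Function.comp] using hZ2
    rw [← hZ'law] at h1
    rw [memLp_map_measure_iff aestronglyMeasurable_id hZ'meas.aemeasurable] at h1
    simpa [Function.comp] using h1
  have hZt2 : MemLp Zt 2 μ := by
    have h := hZ'2.sub hD2
    have he : (Z' - fun ω => Z' ω - Zt ω) = Zt := by funext ω; simp
    rwa [he] at h
  -- pointwise identity Z' - Zh = t • (Z' - Zt)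
  have hptw : ∀ ω, Z' ω - Zh ω = t • (Z' ω - Zt ω) := by
    intro ω; rw [hZh]; simp only [smul_sub, sub_smul, one_smul]; abel
  -- real computation: ∫ ‖Z' - Zh‖² = P
  have hintZZh : ∫ ω, ‖Z' ω - Zh ω‖ ^ 2 ∂μ = P := by
    have h1 : ∀ ω, ‖Z' ω - Zh ω‖ ^ 2 = t ^ 2 * ‖Z' ω - Zt ω‖ ^ 2 := by
      intro ω; rw [hptw ω, norm_smul, mul_pow, Real.norm_eq_abs, sq_abs]
    simp_rw [h1]
    rw [integral_const_mul, hZ'opt, ht, div_pow, Real.sq_sqrt hP0, ← hs2,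
      div_mul_cancel₀ _ (pow_ne_zero 2 hspos.ne')]
  constructor
  · -- Part 1
    set γ : Measure (EuclideanSpace ℝ (Fin k) × EuclideanSpace ℝ (Fin k)) :=
      μ.map (fun ω => (Z' ω, Zh ω)) with hγ
    have hpm : Measurable (fun ω => (Z' ω, Zh ω)) := hZ'meas.prodMk hZhmeas
    have h1 : γ.map Prod.fst = μ.map Z := by
      rw [hγ, Measure.map_map measurable_fst hpm]
      exact hZ'law
    have h2 : γ.map Prod.snd = μ.map Zh := by
      rw [hγ, Measure.map_map measurable_snd hpm]; rfl
    have hγcalc : ∫⁻ z, (‖z.1 - z.2‖₊ : ENNReal) ^ 2 ∂γ = ENNReal.ofReal P := by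
      rw [hγ, lintegral_map (f := fun z : EuclideanSpace ℝ (Fin k) × EuclideanSpace ℝ (Fin k) => (‖z.1 - z.2‖₊ : ENNReal) ^ 2) ((measurable_fst.sub measurable_snd).nnnorm.coe_nnreal_ennreal.pow_const 2) hpm]
      have hpt : ∀ ω, (‖Z' ω - Zh ω‖₊ : ENNReal) ^ 2 = ENNReal.ofReal (‖Z' ω - Zh ω‖ ^ 2) := by
        intro ω
        rw [ENNReal.ofReal_pow (norm_nonneg _), ofReal_norm, enorm_eq_nnnorm]
      simp_rw [hpt]
      rw [← ofReal_integral_eq_lintegral_ofReal ?_ (Filter.Eventually.of_forall fun ω => sq_nonneg _), hintZZh]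
      · have h1 : ∀ ω, ‖Z' ω - Zh ω‖ ^ 2 = t ^ 2 * ‖Z' ω - Zt ω‖ ^ 2 := by
          intro ω; rw [hptw ω, norm_smul, mul_pow, Real.norm_eq_abs, sq_abs]
        simp_rw [h1]
        exact hint_sq.const_mul _
    have hle : (⨅ γ' : {γ' : Measure (EuclideanSpace ℝ (Fin k) × EuclideanSpace ℝ (Fin k)) //
        γ'.map Prod.fst = μ.map Z ∧ γ'.map Prod.snd = μ.map Zh},
        ∫⁻ z, (‖z.1 - z.2‖₊ : ENNReal) ^ 2 ∂(γ'.1)) ≤ ENNReal.ofReal P := by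
      exact iInf_le_of_le ⟨γ, h1, h2⟩ (le_of_eq hγcalc)
    unfold W2sq
    exact le_trans (ENNReal.toReal_mono ENNReal.ofReal_ne_top hle)
      (le_of_eq (ENNReal.toReal_ofReal hP0))
  · -- Part 2
    classical
    have hmUle : (MeasurableSpace.comap U inferInstance) ≤ (inferInstance : MeasurableSpace Ω) := hUmeas.comap_le
    have hmPle : (MeasurableSpace.comap (fun ω => (W ω, U ω)) inferInstance) ≤ (inferInstance : MeasurableSpace Ω) := (hWmeas.prodMk hUmeas).comap_le
    haveI : IsFiniteMeasure (μ.trim hmPle) := isFiniteMeasure_trim hmPle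
    have hmWP : (MeasurableSpace.comap W inferInstance) ≤ (MeasurableSpace.comap (fun ω => (W ω, U ω)) inferInstance) := by
      have h : (MeasurableSpace.comap Prod.fst (inferInstance : MeasurableSpace 𝓦)).comap
          (fun ω => (W ω, U ω)) ≤ (MeasurableSpace.comap (fun ω => (W ω, U ω)) inferInstance) := MeasurableSpace.comap_mono le_sup_left
      rwa [MeasurableSpace.comap_comp] at h
    have hmUP : (MeasurableSpace.comap U inferInstance) ≤ (MeasurableSpace.comap (fun ω => (W ω, U ω)) inferInstance) := by
      have h : (MeasurableSpace.comap Prod.snd (inferInstance : MeasurableSpace ℝ)).comap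
          (fun ω => (W ω, U ω)) ≤ (MeasurableSpace.comap (fun ω => (W ω, U ω)) inferInstance) := MeasurableSpace.comap_mono le_sup_right
      rwa [MeasurableSpace.comap_comp] at h
    have hmWZW : (MeasurableSpace.comap W inferInstance) ≤ (MeasurableSpace.comap (fun ω => (Z ω, W ω)) inferInstance) := by
      have h : (MeasurableSpace.comap Prod.snd (inferInstance : MeasurableSpace 𝓦)).comap
          (fun ω => (Z ω, W ω)) ≤ (MeasurableSpace.comap (fun ω => (Z ω, W ω)) inferInstance) := MeasurableSpace.comap_mono le_sup_right
      rwa [MeasurableSpace.comap_comp] at h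
    have hZmZW : @Measurable Ω _ (MeasurableSpace.comap (fun ω => (Z ω, W ω)) inferInstance) _ Z := by
      have hp : @Measurable Ω _ (MeasurableSpace.comap (fun ω => (Z ω, W ω)) inferInstance) _ (fun ω => (Z ω, W ω)) := measurable_iff_comap_le.mpr le_rfl
      exact measurable_fst.comp hp
    have hindepσ : Indep (MeasurableSpace.comap (fun ω => (Z ω, W ω)) inferInstance) (MeasurableSpace.comap U inferInstance) μ := (IndepFun_iff_Indep _ _ _).mp hindep
    have hindmono : ∀ {m₁ m₂ m₁' m₂' : MeasurableSpace Ω}, Indep m₁ m₂ μ → m₁' ≤ m₁ →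
        m₂' ≤ m₂ → Indep m₁' m₂' μ := by
      intro m₁ m₂ m₁' m₂' h h1 h2
      rw [Indep_iff] at h ⊢
      exact fun t1 t2 ht1 ht2 => h t1 t2 (h1 _ ht1) (h2 _ ht2)
    -- coordinate integrability
    have hZi : ∀ i : Fin k, Integrable (fun ω => Z ω i) μ := fun i =>
      (EuclideanSpace.proj (𝕜 := ℝ) i).integrable_comp hZint
    have hZti : ∀ i : Fin k, Integrable (fun ω => Zt ω i) μ := fun i =>
      (EuclideanSpace.proj (𝕜 := ℝ) i).integrable_comp hZtint
    have hZcoordLp : ∀ i : Fin k, MemLp (fun ω => Z ω i - Zt ω i) 2 μ := by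
      intro i
      have h := memLp_eucl_apply (hZ2.sub hZt2) i
      simpa using h
    have hYcoordLp : ∀ i : Fin k, MemLp (fun ω => Z' ω i - Zt ω i) 2 μ := by
      intro i
      have h := memLp_eucl_apply hD2 i
      simpa using h
    -- conditional expectation over (MeasurableSpace.comap (fun ω => (W ω, U ω)) inferInstance) equals Zt
    have hsetint : ∀ u : Set Ω, MeasurableSet[(MeasurableSpace.comap (fun ω => (W ω, U ω)) inferInstance)] u →
        ∫ x in u, Zt x ∂μ = ∫ x in u, Z x ∂μ := by
      have hS : (MeasurableSpace.comap (fun ω => (W ω, U ω)) inferInstance) = MeasurableSpace.generateFrom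
          {u : Set Ω | ∃ A, MeasurableSet[(MeasurableSpace.comap W inferInstance)] A ∧ ∃ B, MeasurableSet[(MeasurableSpace.comap U inferInstance)] B ∧ u = A ∩ B} := by
        apply le_antisymm
        · have h1 : (MeasurableSpace.comap (fun ω => (W ω, U ω)) inferInstance) = (MeasurableSpace.comap W inferInstance) ⊔ (MeasurableSpace.comap U inferInstance) := by
            show MeasurableSpace.comap _ _ = _
            rw [show (inferInstance : MeasurableSpace (𝓦 × ℝ)) =
              (MeasurableSpace.comap Prod.fst inferInstance ⊔
                MeasurableSpace.comap Prod.snd inferInstance) from rfl,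
              MeasurableSpace.comap_sup, MeasurableSpace.comap_comp, MeasurableSpace.comap_comp]
            rfl
          rw [h1]
          refine sup_le ?_ ?_
          · intro sA hA
            exact MeasurableSpace.measurableSet_generateFrom
              ⟨sA, hA, Set.univ, @MeasurableSet.univ Ω (MeasurableSpace.comap U inferInstance), (Set.inter_univ sA).symm⟩
          · intro sB hB
            exact MeasurableSpace.measurableSet_generateFrom
              ⟨Set.univ, @MeasurableSet.univ Ω (MeasurableSpace.comap W inferInstance), sB, hB, (Set.univ_inter sB).symm⟩
        · refine MeasurableSpace.generateFrom_le ?_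
          rintro u ⟨A, hA, B, hB, rfl⟩
          exact (hmWP _ hA).inter (hmUP _ hB)
      have hpi : IsPiSystem
          {u : Set Ω | ∃ A, MeasurableSet[(MeasurableSpace.comap W inferInstance)] A ∧ ∃ B, MeasurableSet[(MeasurableSpace.comap U inferInstance)] B ∧ u = A ∩ B} := by
        rintro u1 ⟨A1, hA1, B1, hB1, rfl⟩ u2 ⟨A2, hA2, B2, hB2, rfl⟩ -
        refine ⟨A1 ∩ A2, hA1.inter hA2, B1 ∩ B2, hB1.inter hB2, ?_⟩
        ext x
        simp only [Set.mem_inter_iff]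
        tauto
      have hempty : ∫ x in (∅ : Set Ω), Zt x ∂μ = ∫ x in (∅ : Set Ω), Z x ∂μ := by
        simp
      have hbasic : ∀ u ∈ {u : Set Ω | ∃ A, MeasurableSet[(MeasurableSpace.comap W inferInstance)] A ∧ ∃ B,
          MeasurableSet[(MeasurableSpace.comap U inferInstance)] B ∧ u = A ∩ B}, ∫ x in u, Zt x ∂μ = ∫ x in u, Z x ∂μ := by
        rintro u ⟨A, hA, B, hB, rfl⟩
        have hAm : MeasurableSet A := hmW _ hA
        have hBm : MeasurableSet B := hmUle _ hB
        have hABm : MeasurableSet (A ∩ B) := hAm.inter hBm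
        have hcoord : ∀ i : Fin k, ∫ x in A ∩ B, (Z x i - Zt x i) ∂μ = 0 := by
          intro i
          set X : Ω → ℝ := A.indicator (fun ω => Z ω i - Zt ω i) with hX
          set Y : Ω → ℝ := B.indicator (fun _ => (1 : ℝ)) with hY
          have hXint : Integrable X μ := ((hZi i).sub (hZti i)).indicator hAm
          have hYint : Integrable Y μ := (integrable_const _).indicator hBm
          have hXmeas : @Measurable Ω ℝ (MeasurableSpace.comap (fun ω => (Z ω, W ω)) inferInstance) _ X := by
            have hZim : @Measurable Ω ℝ (MeasurableSpace.comap (fun ω => (Z ω, W ω)) inferInstance) _ (fun ω => Z ω i) :=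
              (EuclideanSpace.proj (𝕜 := ℝ) i).measurable.comp hZmZW
            have hZtim : @Measurable Ω ℝ (MeasurableSpace.comap (fun ω => (Z ω, W ω)) inferInstance) _ (fun ω => Zt ω i) :=
              ((EuclideanSpace.proj (𝕜 := ℝ) i).continuous.comp_stronglyMeasurable
                (hZtsm.mono hmWZW)).measurable
            exact (hZim.sub hZtim).indicator (hmWZW _ hA)
          have hYmeas : @Measurable Ω ℝ (MeasurableSpace.comap U inferInstance) _ Y :=
            measurable_const.indicator hB
          have hindXY : IndepFun X Y μ := by
            rw [IndepFun_iff_Indep]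
            exact hindmono hindepσ (measurable_iff_comap_le.mp hXmeas)
              (measurable_iff_comap_le.mp hYmeas)
          have hXY : ∀ ω, X ω * Y ω = (A ∩ B).indicator (fun ω => Z ω i - Zt ω i) ω := by
            intro ω
            by_cases hA' : ω ∈ A <;> by_cases hB' : ω ∈ B <;>
              simp [hX, hY, Set.indicator_apply, hA', hB']
          have hEX : ∫ ω, X ω ∂μ = 0 := by
            rw [hX, integral_indicator hAm,
              integral_sub (hZi i).integrableOn (hZti i).integrableOn,
              ← integral_eucl_apply hZint.integrableOn i,
              ← integral_eucl_apply hZtint.integrableOn i]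
            have h1 : ∫ x in A, Zt x ∂μ = ∫ x in A, Z x ∂μ := by
              rw [hZt]; exact setIntegral_condExp hmW hZint hA
            rw [h1, sub_self]
          have hmul := hindXY.integral_mul_eq_mul_integral hXint.aestronglyMeasurable hYint.aestronglyMeasurable
          calc ∫ x in A ∩ B, (Z x i - Zt x i) ∂μ
              = ∫ ω, X ω * Y ω ∂μ := by
                rw [← integral_indicator hABm]
                exact integral_congr_ae (Filter.Eventually.of_forall fun ω => (hXY ω).symm)
            _ = (∫ ω, X ω ∂μ) * ∫ ω, Y ω ∂μ := hmul
            _ = 0 := by rw [hEX, zero_mul]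
        ext i
        rw [integral_eucl_apply hZtint.integrableOn i, integral_eucl_apply hZint.integrableOn i]
        have h := hcoord i
        rw [integral_sub (hZi i).integrableOn (hZti i).integrableOn, sub_eq_zero] at h
        exact h.symm
      have hcompl : ∀ v : Set Ω, MeasurableSet[(MeasurableSpace.comap (fun ω => (W ω, U ω)) inferInstance)] v →
          (∫ x in v, Zt x ∂μ = ∫ x in v, Z x ∂μ) →
          ∫ x in vᶜ, Zt x ∂μ = ∫ x in vᶜ, Z x ∂μ := by
        intro v hv hC
        have hv0 : MeasurableSet v := hmPle _ hv
        have h1 : ∫ x in v, Zt x ∂μ + ∫ x in vᶜ, Zt x ∂μ = ∫ x, Zt x ∂μ :=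
          integral_add_compl hv0 hZtint
        have h2 : ∫ x in v, Z x ∂μ + ∫ x in vᶜ, Z x ∂μ = ∫ x, Z x ∂μ :=
          integral_add_compl hv0 hZint
        have htot : ∫ x, Zt x ∂μ = ∫ x, Z x ∂μ := by
          rw [hZt]; exact integral_condExp hmW
        have e1 : ∫ x in vᶜ, Zt x ∂μ = ∫ x, Zt x ∂μ - ∫ x in v, Zt x ∂μ := by
          rw [← h1]; abel
        have e2 : ∫ x in vᶜ, Z x ∂μ = ∫ x, Z x ∂μ - ∫ x in v, Z x ∂μ := by
          rw [← h2]; abel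
        rw [e1, e2, htot, hC]
      have hunion : ∀ f : ℕ → Set Ω, Pairwise (Function.onFun Disjoint f) →
          (∀ n, MeasurableSet[(MeasurableSpace.comap (fun ω => (W ω, U ω)) inferInstance)] (f n)) →
          (∀ n, ∫ x in f n, Zt x ∂μ = ∫ x in f n, Z x ∂μ) →
          ∫ x in ⋃ n, f n, Zt x ∂μ = ∫ x in ⋃ n, f n, Z x ∂μ := by
        intro f hdisj hmeasf hC
        have hm0 : ∀ n, MeasurableSet (f n) := fun n => hmPle _ (hmeasf n)
        rw [integral_iUnion hm0 hdisj hZtint.integrableOn,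
          integral_iUnion hm0 hdisj hZint.integrableOn]
        exact tsum_congr hC
      exact fun u hu => MeasurableSpace.induction_on_inter (m := (MeasurableSpace.comap (fun ω => (W ω, U ω)) inferInstance)) hS hpi hempty hbasic
        hcompl hunion u hu
    have hcond : Zt =ᵐ[μ] μ[Z|(MeasurableSpace.comap (fun ω => (W ω, U ω)) inferInstance)] :=
      ae_eq_condExp_of_forall_setIntegral_eq hmPle hZint
        (fun u _ _ => hZtint.integrableOn)
        (fun u hu _ => hsetint u hu)
        ((hZtsm.mono hmWP).aestronglyMeasurable)
    -- orthogonality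
    have hZ'mPm : @Measurable Ω _ (MeasurableSpace.comap (fun ω => (W ω, U ω)) inferInstance) _ Z' := by
      rw [hZ']
      exact hdmeas.comp (measurable_iff_comap_le.mpr le_rfl)
    have horth : ∫ ω, (inner ℝ (Z ω - Zt ω) (Z' ω - Zt ω) : ℝ) ∂μ = 0 := by
      have hinner : ∀ ω, (inner ℝ (Z ω - Zt ω) (Z' ω - Zt ω) : ℝ)
          = ∑ i : Fin k, (Z ω i - Zt ω i) * (Z' ω i - Zt ω i) := by
        intro ω
        simp [PiLp.inner_apply, RCLike.inner_apply, conj_trivial, mul_comm]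
      have hterm : ∀ i : Fin k,
          Integrable (fun ω => (Z ω i - Zt ω i) * (Z' ω i - Zt ω i)) μ :=
        fun i => integrable_mul_of_memLp2 (hZcoordLp i) (hYcoordLp i)
      simp_rw [hinner]
      rw [integral_finset_sum _ (fun i _ => hterm i)]
      refine Finset.sum_eq_zero fun i _ => ?_
      have hfsm : StronglyMeasurable[(MeasurableSpace.comap (fun ω => (W ω, U ω)) inferInstance)] (fun ω => Z' ω i - Zt ω i) := by
        have h1 : StronglyMeasurable[(MeasurableSpace.comap (fun ω => (W ω, U ω)) inferInstance)] (fun ω => Z' ω i) :=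
          (EuclideanSpace.proj (𝕜 := ℝ) i).continuous.comp_stronglyMeasurable
            hZ'mPm.stronglyMeasurable
        have h2 : StronglyMeasurable[(MeasurableSpace.comap (fun ω => (W ω, U ω)) inferInstance)] (fun ω => Zt ω i) :=
          (EuclideanSpace.proj (𝕜 := ℝ) i).continuous.comp_stronglyMeasurable
            (hZtsm.mono hmWP)
        exact h1.sub h2
      have hgint : Integrable (fun ω => Z ω i - Zt ω i) μ := (hZi i).sub (hZti i)
      have hfg : Integrable ((fun ω => Z' ω i - Zt ω i) * fun ω => Z ω i - Zt ω i) μ := by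
        have h := integrable_mul_of_memLp2 (hYcoordLp i) (hZcoordLp i)
        exact h
      have hpull := condExp_mul_of_stronglyMeasurable_left (m := (MeasurableSpace.comap (fun ω => (W ω, U ω)) inferInstance)) hfsm hfg hgint
      have hg0 : μ[fun ω => Z ω i - Zt ω i|(MeasurableSpace.comap (fun ω => (W ω, U ω)) inferInstance)] =ᵐ[μ] 0 := by
        have hZc := condexp_clm hmPle (EuclideanSpace.proj (𝕜 := ℝ) i) hZint
        have h1 : μ[fun ω => Z ω i|(MeasurableSpace.comap (fun ω => (W ω, U ω)) inferInstance)] =ᵐ[μ] fun ω => Zt ω i := by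
          refine hZc.symm.trans ?_
          filter_upwards [hcond] with ω hω
          simp [← hω]
        have h2 : μ[fun ω => Zt ω i|(MeasurableSpace.comap (fun ω => (W ω, U ω)) inferInstance)] = fun ω => Zt ω i :=
          condExp_of_stronglyMeasurable hmPle
            ((EuclideanSpace.proj (𝕜 := ℝ) i).continuous.comp_stronglyMeasurable
              (hZtsm.mono hmWP)) (hZti i)
        have h3 : μ[(fun ω => Z ω i) - (fun ω => Zt ω i)|(MeasurableSpace.comap (fun ω => (W ω, U ω)) inferInstance)] =ᵐ[μ]
            μ[fun ω => Z ω i|(MeasurableSpace.comap (fun ω => (W ω, U ω)) inferInstance)] - μ[fun ω => Zt ω i|(MeasurableSpace.comap (fun ω => (W ω, U ω)) inferInstance)] := condExp_sub (hZi i) (hZti i) _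
        have h4 : (fun ω => Z ω i - Zt ω i) = (fun ω => Z ω i) - (fun ω => Zt ω i) := rfl
        rw [h4]
        refine h3.trans ?_
        filter_upwards [h1] with ω hω
        simp [hω, h2]
      have hzero : ∫ ω, ((fun ω => Z' ω i - Zt ω i) * fun ω => Z ω i - Zt ω i) ω ∂μ = 0 := by
        rw [← integral_condExp hmPle (f := (fun ω => Z' ω i - Zt ω i) * fun ω => Z ω i - Zt ω i)]
        have e2 : μ[(fun ω => Z' ω i - Zt ω i) * fun ω => Z ω i - Zt ω i|(MeasurableSpace.comap (fun ω => (W ω, U ω)) inferInstance)] =ᵐ[μ] 0 := by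
          refine hpull.trans ?_
          filter_upwards [hg0] with ω hω
          simp only [Pi.mul_apply, Pi.zero_apply] at hω ⊢
          rw [hω, mul_zero]
        rw [integral_congr_ae e2]
        simp
      have : ∫ ω, (Z' ω i - Zt ω i) * (Z ω i - Zt ω i) ∂μ = 0 := hzero
      calc ∫ ω, (Z ω i - Zt ω i) * (Z' ω i - Zt ω i) ∂μ
          = ∫ ω, (Z' ω i - Zt ω i) * (Z ω i - Zt ω i) ∂μ := by
            congr 1; funext ω; ring
        _ = 0 := this
    -- final algebra
    have hdecomp : ∀ ω, Z ω - Zh ω = (Z ω - Zt ω) + (1 - t) • (Zt ω - Z' ω) := by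
      intro ω; rw [hZh]; simp only [smul_sub, sub_smul, one_smul]; abel
    have hnorm : ∀ ω, ‖Z ω - Zh ω‖ ^ 2 = ‖Z ω - Zt ω‖ ^ 2
        + (2 * (1 - t)) * (inner ℝ (Z ω - Zt ω) (Zt ω - Z' ω) : ℝ)
        + (1 - t) ^ 2 * ‖Z' ω - Zt ω‖ ^ 2 := by
      intro ω
      rw [hdecomp ω, norm_add_sq_real, real_inner_smul_right, norm_smul,
        Real.norm_eq_abs, mul_pow, sq_abs, norm_sub_rev (Zt ω)]
      ring
    have hI1 : Integrable (fun ω => ‖Z ω - Zt ω‖ ^ 2) μ := by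
      have h := hZ2.sub hZt2
      have h2 := (memLp_two_iff_integrable_sq_norm h.1).mp h
      simpa using h2
    have hZtZ'2 : MemLp (fun ω => Zt ω - Z' ω) 2 μ := by
      have h := hD2.neg
      have he : (-fun ω => Z' ω - Zt ω) = fun ω => Zt ω - Z' ω := by
        funext ω; simp
      rwa [he] at h
    have hZmZt2 : MemLp (fun ω => Z ω - Zt ω) 2 μ := hZ2.sub hZt2
    have hI2 : Integrable (fun ω =>
        (2 * (1 - t)) * (inner ℝ (Z ω - Zt ω) (Zt ω - Z' ω) : ℝ)) μ :=
      (integrable_inner_of_memLp hZmZt2 hZtZ'2).const_mul _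
    have hI3 : Integrable (fun ω => (1 - t) ^ 2 * ‖Z' ω - Zt ω‖ ^ 2) μ :=
      hint_sq.const_mul _
    have hinner0 : ∫ ω, (inner ℝ (Z ω - Zt ω) (Zt ω - Z' ω) : ℝ) ∂μ = 0 := by
      have hptneg : ∀ ω, (inner ℝ (Z ω - Zt ω) (Zt ω - Z' ω) : ℝ)
          = -(inner ℝ (Z ω - Zt ω) (Z' ω - Zt ω) : ℝ) := by
        intro ω
        rw [← inner_neg_right]
        congr 1
        abel
      simp_rw [hptneg]
      rw [integral_neg, horth, neg_zero]
    have hts : (1 - t) * s = s - Real.sqrt P := by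
      rw [ht, sub_mul, one_mul, div_mul_cancel₀ _ hspos.ne']
    calc ∫ ω, ‖Z ω - Zh ω‖ ^ 2 ∂μ
        = ∫ ω, (‖Z ω - Zt ω‖ ^ 2
            + (2 * (1 - t)) * (inner ℝ (Z ω - Zt ω) (Zt ω - Z' ω) : ℝ)
            + (1 - t) ^ 2 * ‖Z' ω - Zt ω‖ ^ 2) ∂μ :=
          integral_congr_ae (Filter.Eventually.of_forall hnorm)
      _ = (∫ ω, ‖Z ω - Zt ω‖ ^ 2 ∂μ
            + ∫ ω, (2 * (1 - t)) * (inner ℝ (Z ω - Zt ω) (Zt ω - Z' ω) : ℝ) ∂μ)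
            + ∫ ω, (1 - t) ^ 2 * ‖Z' ω - Zt ω‖ ^ 2 ∂μ := by
          have e : (fun ω => ‖Z ω - Zt ω‖ ^ 2
              + (2 * (1 - t)) * (inner ℝ (Z ω - Zt ω) (Zt ω - Z' ω) : ℝ)
              + (1 - t) ^ 2 * ‖Z' ω - Zt ω‖ ^ 2)
              = ((fun ω => ‖Z ω - Zt ω‖ ^ 2)
              + fun ω => (2 * (1 - t)) * (inner ℝ (Z ω - Zt ω) (Zt ω - Z' ω) : ℝ))
              + fun ω => (1 - t) ^ 2 * ‖Z' ω - Zt ω‖ ^ 2 := rfl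
          rw [e, integral_add' (hI1.add hI2) hI3, integral_add' hI1 hI2]
      _ = ∫ ω, ‖Z ω - Zt ω‖ ^ 2 ∂μ + (s - Real.sqrt P) ^ 2 := by
          rw [integral_const_mul, hinner0, mul_zero, add_zero, integral_const_mul, hZ'opt, ← hs2]
          have : (1 - t) ^ 2 * s ^ 2 = (s - Real.sqrt P) ^ 2 := by
            rw [← mul_pow, hts]
          rw [this]
end

section
/- Let X be uniform on the unit circle and let X̃ be uniform on the two points (±2/π, 0) (the distribution of the MMSE estimate under optimal 1-bit quantization). Then W₂²(p_X, p_{X̃}) = 1 − 4/π², i.e., the squared Wasserstein-2 distance equals the MMSE distortion. -/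
open MeasureTheory ProbabilityTheory Real

/-- The point of the unit circle in `ℝ²` at angle `θ`. -/
noncomputable def pt (θ : ℝ) : EuclideanSpace ℝ (Fin 2) :=
  (WithLp.equiv 2 (Fin 2 → ℝ)).symm ![Real.cos θ, Real.sin θ]

/-- Uniform probability measure on the interval `[a, b)`. -/
noncomputable def unifIco (a b : ℝ) : Measure ℝ :=
  (ENNReal.ofReal (b - a))⁻¹ • volume.restrict (Set.Ico a b)

/-- Uniform distribution on the unit circle, as the pushforward of the uniform angle. -/
noncomputable def circUnif : Measure (EuclideanSpace ℝ (Fin 2)) :=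
  (unifIco 0 (2 * π)).map pt

/-! ### Auxiliary lemmas -/

lemma aux_pt_continuous : Continuous pt := by
  apply Continuous.comp
  · exact PiLp.continuous_toLp 2 (fun _ : Fin 2 => ℝ)
  · apply continuous_pi
    intro i
    fin_cases i <;> simp <;> [exact Real.continuous_cos; exact Real.continuous_sin]

lemma aux_norm_pt_sub (θ s : ℝ) : ‖pt θ - (WithLp.equiv 2 (Fin 2 → ℝ)).symm ![s, 0]‖^2
    = 1 + s^2 - 2*s*Real.cos θ := by
  simp [pt, EuclideanSpace.norm_eq, Fin.sum_univ_two]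
  rw [Real.sq_sqrt (by positivity)]
  nlinarith [Real.sin_sq_add_cos_sq θ, sq_abs (cos θ - s), sq_abs (sin θ)]

lemma aux_cos_sign (θ : ℝ) (h0 : 0 ≤ θ) (h2 : θ < 2*π) :
    0 ≤ cos θ ↔ θ ≤ π/2 ∨ 3*π/2 ≤ θ := by
  constructor
  · intro h
    by_contra hc
    push_neg at hc
    have h1 : cos (θ - π) > 0 := by
      apply Real.cos_pos_of_mem_Ioo
      constructor <;> [linarith [hc.1]; linarith [hc.2]]
    have : cos (θ - π) = -cos θ := Real.cos_sub_pi θ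
    linarith
  · rintro (h | h)
    · exact Real.cos_nonneg_of_mem_Icc ⟨by linarith [Real.pi_pos], h⟩
    · have : cos θ = cos (θ - 2*π) := (Real.cos_sub_two_pi θ).symm
      rw [this]
      exact Real.cos_nonneg_of_mem_Icc ⟨by linarith, by linarith⟩

lemma aux_int_abs_cos : ∫ θ in (0:ℝ)..(2*π), |cos θ| = 4 := by
  have pi_pos := Real.pi_pos
  have h1 : ∫ θ in (0:ℝ)..(π/2), |cos θ| = 1 := by
    rw [intervalIntegral.integral_congr (g := cos) ?_]
    · simp
    · intro x hx
      rw [Set.uIcc_of_le (by linarith)] at hx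
      exact abs_of_nonneg (Real.cos_nonneg_of_mem_Icc ⟨by linarith [hx.1], hx.2⟩)
  have h2 : ∫ θ in (π/2:ℝ)..(3*π/2), |cos θ| = 2 := by
    rw [intervalIntegral.integral_congr (g := fun x => -cos x) ?_]
    · rw [intervalIntegral.integral_neg]
      simp [Real.sin_pi_div_two]
      have : (3*π/2 : ℝ) = π/2 + π := by ring
      rw [this, Real.sin_add_pi, Real.sin_pi_div_two]
      ring
    · intro x hx
      rw [Set.uIcc_of_le (by linarith)] at hx
      have : cos (x - π) = -cos x := Real.cos_sub_pi x
      have hpos : 0 ≤ cos (x - π) :=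
        Real.cos_nonneg_of_mem_Icc ⟨by linarith [hx.1], by linarith [hx.2]⟩
      simp only
      rw [abs_of_nonpos (by linarith)]
  have h3 : ∫ θ in (3*π/2:ℝ)..(2*π), |cos θ| = 1 := by
    rw [intervalIntegral.integral_congr (g := cos) ?_]
    · simp
      have : (3*π/2 : ℝ) = π/2 + π := by ring
      rw [this, Real.sin_add_pi, Real.sin_pi_div_two]
      ring
    · intro x hx
      rw [Set.uIcc_of_le (by linarith)] at hx
      show |cos x| = cos x
      have : cos (x - 2*π) = cos x := Real.cos_sub_two_pi x
      rw [← this]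
      exact abs_of_nonneg (Real.cos_nonneg_of_mem_Icc
        (show x - 2*π ∈ Set.Icc (-(π/2)) (π/2) from ⟨by linarith [hx.1], by linarith [hx.2]⟩))
  have i1 : IntervalIntegrable (fun θ => |cos θ|) volume 0 (π/2) :=
    (Real.continuous_cos.abs).intervalIntegrable _ _
  have i2 : IntervalIntegrable (fun θ => |cos θ|) volume (π/2) (3*π/2) :=
    (Real.continuous_cos.abs).intervalIntegrable _ _
  have i3 : IntervalIntegrable (fun θ => |cos θ|) volume (3*π/2) (2*π) :=
    (Real.continuous_cos.abs).intervalIntegrable _ _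
  have e1 := intervalIntegral.integral_add_adjacent_intervals i1 i2
  have e2 := intervalIntegral.integral_add_adjacent_intervals (i1.trans i2) i3
  linarith

/-- The pointwise transport cost function. -/
noncomputable def gfun (θ : ℝ) : ℝ := 1 + 4/π^2 - 4/π * |cos θ|

lemma aux_g_cont : Continuous gfun :=
  continuous_const.sub (continuous_const.mul Real.continuous_cos.abs)

lemma aux_g_nonneg (θ : ℝ) : 0 ≤ gfun θ := by
  have hpi := Real.pi_gt_three
  have h1 : |cos θ| ≤ 1 := Real.abs_cos_le_one θ
  have h0 : (0:ℝ) ≤ |cos θ| := abs_nonneg _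
  unfold gfun
  have hne : π ≠ 0 := by linarith
  have hinv : (0:ℝ) < 4/π := by positivity
  have key : 4/π * |cos θ| ≤ 4/π := by
    calc 4/π * |cos θ| ≤ 4/π * 1 := mul_le_mul_of_nonneg_left h1 hinv.le
    _ = 4/π := mul_one _
  have hexp : (1 - 2/π)^2 = 1 - 4/π + 4/π^2 := by field_simp; ring
  have key2 : 4/π ≤ 1 + 4/π^2 := by nlinarith [sq_nonneg (1 - 2/π)]
  linarith

lemma aux_int_g : ∫ θ in (0:ℝ)..(2*π), gfun θ = 2*π - 8/π := by
  have hpi := Real.pi_pos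
  unfold gfun
  rw [intervalIntegral.integral_sub (g := fun θ => 4/π * |cos θ|) intervalIntegrable_const
      ((continuous_const.mul Real.continuous_cos.abs).intervalIntegrable _ _),
    intervalIntegral.integral_const_mul, aux_int_abs_cos,
    intervalIntegral.integral_const]
  rw [smul_eq_mul]
  field_simp
  ring

lemma aux_lint_g :
    ∫⁻ θ, ENNReal.ofReal (gfun θ) ∂(unifIco 0 (2*π)) = ENNReal.ofReal (1 - 4/π^2) := by
  have hpi := Real.pi_pos
  unfold unifIco
  rw [lintegral_smul_measure]
  have hkey : ∫⁻ θ in Set.Ico (0:ℝ) (2*π), ENNReal.ofReal (gfun θ) ∂volume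
      = ENNReal.ofReal (2*π - 8/π) := by
    rw [← ofReal_integral_eq_lintegral_ofReal]
    · congr 1
      rw [MeasureTheory.integral_Ico_eq_integral_Ioo, ← MeasureTheory.integral_Ioc_eq_integral_Ioo,
        ← intervalIntegral.integral_of_le (by linarith)]
      exact aux_int_g
    · exact (aux_g_cont.integrableOn_Icc (a := 0) (b := 2*π)).mono_set Set.Ico_subset_Icc_self
    · exact Filter.Eventually.of_forall fun θ => aux_g_nonneg θ
  rw [hkey]
  have h2 : (2*π - 8/π) = (2*π) * (1 - 4/π^2) := by field_simp; ring
  rw [h2, ENNReal.ofReal_mul (by linarith), sub_zero, smul_eq_mul, ← mul_assoc,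
    ENNReal.inv_mul_cancel ((ENNReal.ofReal_pos.mpr (by linarith)).ne') ENNReal.ofReal_ne_top, one_mul]

lemma aux_meas_cos_nonneg :
    unifIco 0 (2*π) {θ | 0 ≤ cos θ} = 2⁻¹ := by
  have hpi := Real.pi_pos
  have hS : MeasurableSet {θ : ℝ | 0 ≤ cos θ} :=
    measurableSet_le measurable_const Real.continuous_cos.measurable
  unfold unifIco
  rw [Measure.smul_apply, Measure.restrict_apply hS]
  have hset : {θ : ℝ | 0 ≤ cos θ} ∩ Set.Ico 0 (2*π)
      = Set.Icc 0 (π/2) ∪ Set.Ico (3*π/2) (2*π) := by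
    ext θ
    simp only [Set.mem_inter_iff, Set.mem_setOf_eq, Set.mem_Ico, Set.mem_union, Set.mem_Icc]
    constructor
    · rintro ⟨hc, h0, h2⟩
      rcases (aux_cos_sign θ h0 h2).mp hc with h | h
      · exact Or.inl ⟨h0, h⟩
      · exact Or.inr ⟨h, h2⟩
    · rintro (⟨h0, h⟩ | ⟨h, h2⟩)
      · exact ⟨(aux_cos_sign θ h0 (by linarith)).mpr (Or.inl h), h0, by linarith⟩
      · exact ⟨(aux_cos_sign θ (by linarith) h2).mpr (Or.inr h), by linarith, h2⟩
  rw [hset, measure_union (by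
      apply Set.disjoint_left.mpr
      rintro θ ⟨_, h1⟩ ⟨h2, _⟩
      linarith) measurableSet_Ico]
  rw [Real.volume_Icc, Real.volume_Ico]
  rw [← ENNReal.ofReal_add (by linarith) (by linarith)]
  have : (π/2 - 0) + (2*π - 3*π/2) = π := by ring
  rw [this]
  have h2 : ENNReal.ofReal (2*π - 0) = 2 * ENNReal.ofReal π := by
    rw [sub_zero, ENNReal.ofReal_mul (by norm_num)]
    norm_num
  rw [h2, ENNReal.mul_inv (Or.inl (by norm_num)) (Or.inl ENNReal.ofNat_ne_top),
    smul_eq_mul, mul_assoc, ENNReal.inv_mul_cancel ((ENNReal.ofReal_pos.mpr (by linarith)).ne') ENNReal.ofReal_ne_top,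
    mul_one]

lemma aux_meas_cos_neg :
    unifIco 0 (2*π) {θ | ¬ 0 ≤ cos θ} = 2⁻¹ := by
  have hpi := Real.pi_pos
  have hS : MeasurableSet {θ : ℝ | ¬ 0 ≤ cos θ} :=
    (measurableSet_le measurable_const Real.continuous_cos.measurable).compl
  unfold unifIco
  rw [Measure.smul_apply, Measure.restrict_apply hS]
  have hset : {θ : ℝ | ¬ 0 ≤ cos θ} ∩ Set.Ico 0 (2*π) = Set.Ioo (π/2) (3*π/2) := by
    ext θ
    simp only [Set.mem_inter_iff, Set.mem_setOf_eq, Set.mem_Ico, Set.mem_Ioo, not_le]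
    constructor
    · rintro ⟨hc, h0, h2⟩
      by_contra hcon
      push_neg at hcon
      have : θ ≤ π/2 ∨ 3*π/2 ≤ θ := by
        rcases le_or_gt θ (π/2) with h | h
        · exact Or.inl h
        · exact Or.inr (hcon h)
      have := (aux_cos_sign θ h0 h2).mpr this
      linarith
    · rintro ⟨h1, h2⟩
      have hθ0 : (0:ℝ) ≤ θ := by linarith
      have hθ2 : θ < 2*π := by linarith
      refine ⟨?_, hθ0, hθ2⟩
      by_contra hc
      push_neg at hc
      rcases (aux_cos_sign θ hθ0 hθ2).mp hc with h | h <;> linarith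
  rw [hset, Real.volume_Ioo]
  have : (3*π/2 - π/2) = π := by ring
  rw [this]
  have h2 : ENNReal.ofReal (2*π - 0) = 2 * ENNReal.ofReal π := by
    rw [sub_zero, ENNReal.ofReal_mul (by norm_num)]
    norm_num
  rw [h2, ENNReal.mul_inv (Or.inl (by norm_num)) (Or.inl ENNReal.ofNat_ne_top),
    smul_eq_mul, mul_assoc, ENNReal.inv_mul_cancel ((ENNReal.ofReal_pos.mpr (by linarith)).ne') ENNReal.ofReal_ne_top,
    mul_one]

lemma aux_unif_univ : unifIco 0 (2*π) Set.univ = 1 := by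
  have hpi := Real.pi_pos
  unfold unifIco
  rw [Measure.smul_apply, Measure.restrict_apply MeasurableSet.univ, Set.univ_inter,
    Real.volume_Ico, smul_eq_mul,
    ENNReal.inv_mul_cancel ((ENNReal.ofReal_pos.mpr (by linarith)).ne') ENNReal.ofReal_ne_top]

/-- Let `X` be uniform on the unit circle and let `X̃` be uniform on the two points
`(±2/π, 0)` (the distribution of the MMSE estimate under optimal `1`-bit quantization).
Then `W₂²(p_X, p_X̃) = 1 − 4/π²`: the squared Wasserstein-2 distance equals the MMSE
distortion. -/
theorem stmt5 :
    W2sq circUnif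
      ((2 : ENNReal)⁻¹ •
        (Measure.dirac ((WithLp.equiv 2 (Fin 2 → ℝ)).symm ![2 / π, 0]) +
         Measure.dirac ((WithLp.equiv 2 (Fin 2 → ℝ)).symm ![-(2 / π), 0]))) =
      1 - 4 / π ^ 2 := by
  have hpi := Real.pi_pos
  set a : EuclideanSpace ℝ (Fin 2) := (WithLp.equiv 2 (Fin 2 → ℝ)).symm ![2 / π, 0] with ha
  set b : EuclideanSpace ℝ (Fin 2) := (WithLp.equiv 2 (Fin 2 → ℝ)).symm ![-(2 / π), 0] with hb
  set q : Measure (EuclideanSpace ℝ (Fin 2)) :=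
    (2 : ENNReal)⁻¹ • (Measure.dirac a + Measure.dirac b) with hq
  -- norm identities
  have hnormA : ∀ θ, ‖pt θ - a‖^2 = 1 + 4/π^2 - 4/π * cos θ := by
    intro θ; rw [ha, aux_norm_pt_sub]; ring
  have hnormB : ∀ θ, ‖pt θ - b‖^2 = 1 + 4/π^2 + 4/π * cos θ := by
    intro θ; rw [hb, aux_norm_pt_sub]; ring
  have hk : (0:ℝ) < 4/π := by positivity
  have hmin : ∀ θ, min (‖pt θ - a‖^2) (‖pt θ - b‖^2) = gfun θ := by
    intro θ
    rw [hnormA, hnormB]; unfold gfun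
    rcases abs_cases (cos θ) with ⟨h1, h2⟩ | ⟨h1, h2⟩
    · rw [h1, min_eq_left (by nlinarith [mul_nonneg hk.le h2])]
    · rw [h1, min_eq_right (by nlinarith [mul_nonneg hk.le (neg_nonneg.mpr h2.le)])]
      ring
  -- measurability
  have hpt_meas : Measurable pt := aux_pt_continuous.measurable
  have hG_cont : Continuous (fun x : EuclideanSpace ℝ (Fin 2) => min (‖x - a‖^2) (‖x - b‖^2)) :=
    (((continuous_id.sub continuous_const).norm.pow 2).min
      ((continuous_id.sub continuous_const).norm.pow 2))
  have hG_meas : Measurable (fun x : EuclideanSpace ℝ (Fin 2) =>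
      ENNReal.ofReal (min (‖x - a‖^2) (‖x - b‖^2))) :=
    ENNReal.measurable_ofReal.comp hG_cont.measurable
  have hcost_meas : Measurable (fun z : EuclideanSpace ℝ (Fin 2) × EuclideanSpace ℝ (Fin 2) =>
      (‖z.1 - z.2‖₊ : ENNReal) ^ 2) :=
    ((measurable_fst.sub measurable_snd).nnnorm.coe_nnreal_ennreal).pow_const 2
  have hn : ∀ v : EuclideanSpace ℝ (Fin 2), ((‖v‖₊ : ENNReal))^2 = ENNReal.ofReal (‖v‖^2) := by
    intro v
    rw [ENNReal.ofReal_pow (norm_nonneg _), ofReal_norm, enorm_eq_nnnorm]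
  set V : ENNReal := ENNReal.ofReal (1 - 4/π^2) with hV
  -- the pushforward integral identity for the min function
  have h3 : ∫⁻ x, ENNReal.ofReal (min (‖x - a‖^2) (‖x - b‖^2)) ∂circUnif = V := by
    unfold circUnif
    rw [lintegral_map hG_meas hpt_meas]
    calc ∫⁻ θ, ENNReal.ofReal (min (‖pt θ - a‖^2) (‖pt θ - b‖^2)) ∂(unifIco 0 (2*π))
        = ∫⁻ θ, ENNReal.ofReal (gfun θ) ∂(unifIco 0 (2*π)) := by
          apply lintegral_congr; intro θ; rw [hmin θ]
      _ = V := aux_lint_g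
  -- lower bound
  have hlow : ∀ γ : {γ : Measure (EuclideanSpace ℝ (Fin 2) × EuclideanSpace ℝ (Fin 2)) //
      γ.map Prod.fst = circUnif ∧ γ.map Prod.snd = q},
      V ≤ ∫⁻ z, (‖z.1 - z.2‖₊ : ENNReal) ^ 2 ∂(γ.1) := by
    rintro ⟨γ, hfst, hsnd⟩
    have hSmeas : MeasurableSet ({a, b} : Set (EuclideanSpace ℝ (Fin 2))) :=
      (measurableSet_singleton b).insert a
    have hae : ∀ᵐ z ∂γ, z.2 ∈ ({a, b} : Set (EuclideanSpace ℝ (Fin 2))) := by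
      rw [ae_iff]
      have hpre : {z : EuclideanSpace ℝ (Fin 2) × EuclideanSpace ℝ (Fin 2) |
          ¬ z.2 ∈ ({a, b} : Set (EuclideanSpace ℝ (Fin 2)))}
          = Prod.snd ⁻¹' ({a, b}ᶜ : Set (EuclideanSpace ℝ (Fin 2))) := rfl
      rw [hpre, ← Measure.map_apply measurable_snd hSmeas.compl, hsnd, hq]
      simp [Measure.dirac_apply' _ hSmeas.compl, Set.indicator]
    have h1 : ∫⁻ z, ENNReal.ofReal (min (‖z.1 - a‖^2) (‖z.1 - b‖^2)) ∂γ
        ≤ ∫⁻ z, (‖z.1 - z.2‖₊ : ENNReal) ^ 2 ∂γ := by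
      apply lintegral_mono_ae
      filter_upwards [hae] with z hz
      rcases Set.mem_insert_iff.mp hz with hz' | hz'
      · rw [hz', hn]
        exact ENNReal.ofReal_le_ofReal (min_le_left _ _)
      · rw [Set.mem_singleton_iff.mp hz', hn]
        exact ENNReal.ofReal_le_ofReal (min_le_right _ _)
    have h2 : ∫⁻ z, ENNReal.ofReal (min (‖z.1 - a‖^2) (‖z.1 - b‖^2)) ∂γ
        = ∫⁻ x, ENNReal.ofReal (min (‖x - a‖^2) (‖x - b‖^2)) ∂circUnif := by
      rw [← hfst, lintegral_map hG_meas measurable_fst]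
    calc V = ∫⁻ z, ENNReal.ofReal (min (‖z.1 - a‖^2) (‖z.1 - b‖^2)) ∂γ := by rw [h2, h3]
      _ ≤ _ := h1
  -- the optimal coupling
  set f : ℝ → EuclideanSpace ℝ (Fin 2) := fun θ => if 0 ≤ cos θ then a else b with hf
  have hf_meas : Measurable f :=
    Measurable.ite (measurableSet_le measurable_const Real.continuous_cos.measurable)
      measurable_const measurable_const
  have hpair : Measurable (fun θ => (pt θ, f θ)) := hpt_meas.prodMk hf_meas
  set γ0 : Measure (EuclideanSpace ℝ (Fin 2) × EuclideanSpace ℝ (Fin 2)) :=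
    (unifIco 0 (2*π)).map (fun θ => (pt θ, f θ)) with hγ0
  have hfst0 : γ0.map Prod.fst = circUnif := by
    rw [hγ0, Measure.map_map measurable_fst hpair]; rfl
  have hsnd0 : γ0.map Prod.snd = q := by
    rw [hγ0, Measure.map_map measurable_snd hpair]
    have hcomp : (Prod.snd ∘ fun θ => (pt θ, f θ)) = f := rfl
    rw [hcomp]
    ext s hs
    rw [Measure.map_apply hf_meas hs, hq]
    have hrhs : ((2 : ENNReal)⁻¹ • (Measure.dirac a + Measure.dirac b)) s
        = 2⁻¹ * (s.indicator 1 a + s.indicator 1 b) := by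
      simp [Measure.dirac_apply' _ hs]
      ring
    rw [hrhs]
    by_cases has : a ∈ s <;> by_cases hbs : b ∈ s
    · have : f ⁻¹' s = Set.univ := by
        ext θ; simp only [hf, Set.mem_preimage, Set.mem_univ, iff_true]
        split <;> assumption
      rw [this, aux_unif_univ]
      simp [Set.indicator_of_mem, has, hbs]
      rw [one_add_one_eq_two]
      exact (ENNReal.inv_mul_cancel two_ne_zero ENNReal.ofNat_ne_top).symm
    · have : f ⁻¹' s = {θ | 0 ≤ cos θ} := by
        ext θ; simp only [hf, Set.mem_preimage, Set.mem_setOf_eq]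
        constructor
        · intro h; by_contra hc; rw [if_neg hc] at h; exact hbs h
        · intro h; rw [if_pos h]; exact has
      rw [this, aux_meas_cos_nonneg]
      simp [Set.indicator_of_mem, Set.indicator_of_notMem, has, hbs]
    · have : f ⁻¹' s = {θ | ¬ 0 ≤ cos θ} := by
        ext θ; simp only [hf, Set.mem_preimage, Set.mem_setOf_eq]
        constructor
        · intro h hc; rw [if_pos hc] at h; exact has h
        · intro h; rw [if_neg h]; exact hbs
      rw [this, aux_meas_cos_neg]
      simp [Set.indicator_of_mem, Set.indicator_of_notMem, has, hbs]
    · have : f ⁻¹' s = ∅ := by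
        ext θ; simp only [hf, Set.mem_preimage, Set.mem_empty_iff_false, iff_false]
        intro h
        by_cases hc : 0 ≤ cos θ
        · rw [if_pos hc] at h; exact has h
        · rw [if_neg hc] at h; exact hbs h
      rw [this]
      simp [Set.indicator_of_notMem, has, hbs]
  have hup : ∫⁻ z, (‖z.1 - z.2‖₊ : ENNReal) ^ 2 ∂γ0 = V := by
    rw [hγ0, lintegral_map hcost_meas hpair]
    calc ∫⁻ θ, (‖pt θ - f θ‖₊ : ENNReal) ^ 2 ∂(unifIco 0 (2*π))
        = ∫⁻ θ, ENNReal.ofReal (gfun θ) ∂(unifIco 0 (2*π)) := by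
          apply lintegral_congr
          intro θ
          rw [hn]
          congr 1
          by_cases hc : 0 ≤ cos θ
          · simp only [hf, if_pos hc]
            rw [hnormA θ]; unfold gfun; rw [abs_of_nonneg hc]
          · simp only [hf, if_neg hc]
            rw [hnormB θ]; unfold gfun
            rw [abs_of_nonpos (le_of_not_ge hc)]; ring
      _ = V := aux_lint_g
  -- conclude
  unfold W2sq
  have hInf : (⨅ γ : {γ : Measure (EuclideanSpace ℝ (Fin 2) × EuclideanSpace ℝ (Fin 2)) //
      γ.map Prod.fst = circUnif ∧ γ.map Prod.snd = q},
      ∫⁻ z, (‖z.1 - z.2‖₊ : ENNReal) ^ 2 ∂(γ.1)) = V := by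
    apply le_antisymm
    · exact (iInf_le _ ⟨γ0, hfst0, hsnd0⟩).trans_eq hup
    · exact le_iInf hlow
  rw [hInf, hV]
  rw [ENNReal.toReal_ofReal ?_]
  have h4 : 4/π^2 ≤ 1 := by
    rw [div_le_one (by positivity)]
    nlinarith [Real.pi_gt_three]
  linarith
end

section
/- Let X be uniform on the unit circle, and compare (i) 1-bit quantization with 1-bit of common randomness (M=2, N=2), achieving distortion D₁(P) = 1 − 4/π² + [max(√(1 − 4(2√2−1)/π²) − √P, 0)]², against (ii) 2-bit quantization without common randomness (M=4, N=1), achieving D₂(P) = 1 − 8/π² + [max(√(1 − 8/π²) − √P, 0)]². Then D₂(P) < D₁(P) for all P ≥ 0. -/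
open Real

/-- For the uniform source on the unit circle, `2`-bit quantization without common randomness
(`M = 4`, `N = 1`), achieving
`D₂(P) = 1 − 8/π² + (max(√(1 − 8/π²) − √P, 0))²`,
strictly outperforms `1`-bit quantization with `1` bit of common randomness
(`M = 2`, `N = 2`), achieving
`D₁(P) = 1 − 4/π² + (max(√(1 − 4(2√2−1)/π²) − √P, 0))²`, for all `P ≥ 0`. -/
theorem stmt12 (P : ℝ) (hP : 0 ≤ P) :
    1 - 8 / π ^ 2 + (max (Real.sqrt (1 - 8 / π ^ 2) - Real.sqrt P) 0) ^ 2 <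
      1 - 4 / π ^ 2 +
        (max (Real.sqrt (1 - 4 * (2 * Real.sqrt 2 - 1) / π ^ 2) - Real.sqrt P) 0) ^ 2 := by
  have hπ : (3:ℝ) < π := Real.pi_gt_three
  have hπ2 : (9:ℝ) < π ^ 2 := by nlinarith
  have hπ2pos : (0:ℝ) < π ^ 2 := by nlinarith
  have h2lt : Real.sqrt 2 < 1.5 := by
    rw [show (1.5:ℝ) = Real.sqrt (1.5 ^ 2) from (Real.sqrt_sq (by norm_num)).symm]
    exact Real.sqrt_lt_sqrt (by norm_num) (by norm_num)
  have h2ge : (1:ℝ) ≤ Real.sqrt 2 := by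
    rw [show (1:ℝ) = Real.sqrt 1 from Real.sqrt_one.symm]
    exact Real.sqrt_le_sqrt (by norm_num)
  set s := Real.sqrt P with hsdef
  have hs : 0 ≤ s := Real.sqrt_nonneg _
  have ha0 : (0:ℝ) ≤ 1 - 8 / π ^ 2 := by
    have : 8 / π ^ 2 < 1 := by rw [div_lt_one hπ2pos]; nlinarith
    linarith
  have hb0 : (0:ℝ) ≤ 1 - 4 * (2 * Real.sqrt 2 - 1) / π ^ 2 := by
    have : 4 * (2 * Real.sqrt 2 - 1) / π ^ 2 < 1 := by
      rw [div_lt_one hπ2pos]; nlinarith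
    linarith
  set a := Real.sqrt (1 - 8 / π ^ 2) with hadef
  set b := Real.sqrt (1 - 4 * (2 * Real.sqrt 2 - 1) / π ^ 2) with hbdef
  clear_value s a b
  have ha2 : a ^ 2 = 1 - 8 / π ^ 2 := hadef ▸ Real.sq_sqrt ha0
  have hb2 : b ^ 2 = 1 - 4 * (2 * Real.sqrt 2 - 1) / π ^ 2 := hbdef ▸ Real.sq_sqrt hb0
  have hab : a ≤ b := by
    rw [hadef, hbdef]
    apply Real.sqrt_le_sqrt
    have h8 : 4 * (2 * Real.sqrt 2 - 1) ≤ 8 := by nlinarith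
    have h48 : 4 * (2 * Real.sqrt 2 - 1) / π ^ 2 ≤ 8 / π ^ 2 := by gcongr
    linarith
  rcases le_or_gt a s with h | h
  · rw [max_eq_right (by linarith : a - s ≤ 0)]
    have hm : 0 ≤ max (b - s) 0 := le_max_right _ _
    have h48 : 4 / π ^ 2 < 8 / π ^ 2 := by gcongr <;> norm_num
    nlinarith [sq_nonneg (max (b - s) 0)]
  · rw [max_eq_left (by linarith : 0 ≤ a - s),
      max_eq_left (by linarith : 0 ≤ b - s)]
    have key : 0 ≤ (b - a) * (a + b - 2 * s) :=
      mul_nonneg (by linarith) (by linarith)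
    have h4pos : (0:ℝ) < 4 / π ^ 2 := by positivity
    have e1 : (a - s) ^ 2 = a ^ 2 - 2 * a * s + s ^ 2 := by ring
    have e2 : (b - s) ^ 2 = b ^ 2 - 2 * b * s + s ^ 2 := by ring
    have key' : 2 * b * s - 2 * a * s ≤ b ^ 2 - a ^ 2 := by nlinarith [key]
    have hw : 8 / π ^ 2 = 2 * (4 / π ^ 2) := by ring
    linarith [e1, e2, key', h4pos, hw]
end
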